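/- arXiv:2210.08156 — 12 statements merged into one kernel-verified Lean document; each statement's English description precedes it below -/
import Mathlib

section
/- Let X be a real Banach space, P : X → X a bounded linear map, and Q = id − P. Suppose ‖P‖ ≤ c_P and ‖Q‖ ≤ c_Q with c_P, c_Q > 0. Fix real numbers 0 ≤ s₁ < s₂ and set ϱ₀ = min{ (s₂ − s₁)/(2(c_Q + c_P s₁)(1 + s₁)), 1/(2 c_P (1 + s₁)) }. If u₁, u₂ ∈ X satisfy ‖u₁‖ = ‖u₂‖ = 1, ‖Q u₁‖ ≤ s₁ ‖P u₁‖, and ‖u₂ − u₁‖ ≤ ϱ₀, then ‖Q u₂‖ ≤ s₂ ‖P u₂‖. -/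
/-- Persistence of cone membership under small perturbations on the unit sphere. -/
theorem stmt0 (X : Type*) [NormedAddCommGroup X] [NormedSpace ℝ X] [CompleteSpace X]
    (P Q : X →L[ℝ] X) (hQ : Q = ContinuousLinearMap.id ℝ X - P)
    (cP cQ : ℝ) (hcP : 0 < cP) (hcQ : 0 < cQ)
    (hPn : ‖P‖ ≤ cP) (hQn : ‖Q‖ ≤ cQ)
    (s₁ s₂ : ℝ) (hs₁ : 0 ≤ s₁) (hs : s₁ < s₂)
    (ϱ₀ : ℝ)
    (hϱ : ϱ₀ = min ((s₂ - s₁) / (2 * (cQ + cP * s₁) * (1 + s₁))) (1 / (2 * cP * (1 + s₁))))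
    (u₁ u₂ : X) (hu₁ : ‖u₁‖ = 1) (hu₂ : ‖u₂‖ = 1)
    (hcone : ‖Q u₁‖ ≤ s₁ * ‖P u₁‖)
    (hclose : ‖u₂ - u₁‖ ≤ ϱ₀) :
    ‖Q u₂‖ ≤ s₂ * ‖P u₂‖ := by
  have hs1 : (0:ℝ) < 1 + s₁ := by linarith
  have hc : (0:ℝ) < cQ + cP * s₁ := by nlinarith
  -- decomposition: u₁ = P u₁ + Q u₁
  have hsum : 1 ≤ ‖P u₁‖ + ‖Q u₁‖ := by
    have : u₁ = P u₁ + Q u₁ := by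
      simp [hQ, ContinuousLinearMap.sub_apply]
    calc (1:ℝ) = ‖u₁‖ := hu₁.symm
    _ = ‖P u₁ + Q u₁‖ := by rw [← this]
    _ ≤ ‖P u₁‖ + ‖Q u₁‖ := norm_add_le _ _
  have hd0 : 0 ≤ ‖u₂ - u₁‖ := norm_nonneg _
  have hPd : ‖P u₁‖ - ‖P u₂‖ ≤ cP * ‖u₂ - u₁‖ := by
    have h1 : ‖P u₁ - P u₂‖ ≤ cP * ‖u₁ - u₂‖ := by
      calc ‖P u₁ - P u₂‖ = ‖P (u₁ - u₂)‖ := by rw [map_sub]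
      _ ≤ ‖P‖ * ‖u₁ - u₂‖ := P.le_opNorm _
      _ ≤ cP * ‖u₁ - u₂‖ := by gcongr
    have h2 : ‖P u₁‖ - ‖P u₂‖ ≤ ‖P u₁ - P u₂‖ := norm_sub_norm_le _ _
    rw [norm_sub_rev u₂ u₁]
    linarith
  have hQd : ‖Q u₂‖ - ‖Q u₁‖ ≤ cQ * ‖u₂ - u₁‖ := by
    have h1 : ‖Q u₂ - Q u₁‖ ≤ cQ * ‖u₂ - u₁‖ := by
      calc ‖Q u₂ - Q u₁‖ = ‖Q (u₂ - u₁)‖ := by rw [map_sub]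
      _ ≤ ‖Q‖ * ‖u₂ - u₁‖ := Q.le_opNorm _
      _ ≤ cQ * ‖u₂ - u₁‖ := by gcongr
    linarith [norm_sub_norm_le (Q u₂) (Q u₁)]
  have hr1 : ϱ₀ * (2 * (cQ + cP * s₁) * (1 + s₁)) ≤ s₂ - s₁ := by
    have := min_le_left ((s₂ - s₁) / (2 * (cQ + cP * s₁) * (1 + s₁))) (1 / (2 * cP * (1 + s₁)))
    rw [← hϱ] at this
    rw [← le_div_iff₀ (by positivity)]
    exact this
  have hr2 : ϱ₀ * (2 * cP * (1 + s₁)) ≤ 1 := by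
    have := min_le_right ((s₂ - s₁) / (2 * (cQ + cP * s₁) * (1 + s₁))) (1 / (2 * cP * (1 + s₁)))
    rw [← hϱ] at this
    rw [← le_div_iff₀ (by positivity)]
    exact this
  have hρ0 : 0 ≤ ϱ₀ := le_trans hd0 hclose
  -- ‖P u₁‖ ≥ 1/(1+s₁)
  have ha : 1 ≤ (1 + s₁) * ‖P u₁‖ := by nlinarith
  -- ‖P u₂‖ ≥ ‖P u₁‖ - cP * ϱ₀
  have hb : ‖P u₁‖ - cP * ϱ₀ ≤ ‖P u₂‖ := by nlinarith
  -- 2(1+s₁)‖P u₂‖ ≥ 1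
  have hb2 : 1 ≤ 2 * (1 + s₁) * ‖P u₂‖ := by nlinarith
  -- ‖Q u₂‖ ≤ s₁ ‖P u₂‖ + (cQ + cP s₁) ϱ₀
  have hq : ‖Q u₂‖ ≤ s₁ * ‖P u₂‖ + (cQ + cP * s₁) * ϱ₀ := by nlinarith
  -- (cQ + cP s₁) ϱ₀ ≤ (s₂ - s₁) ‖P u₂‖
  have hlast : (cQ + cP * s₁) * ϱ₀ ≤ (s₂ - s₁) * ‖P u₂‖ := by nlinarith
  linarith
end

section
/- Let X be a real Banach space and T : X → X a bounded linear operator with ‖T‖ ≤ ζ, where ζ > 0. Let 0 < δ < 1, 0 < λ₁ < 1, t ∈ [1/2, 1], and set λ₀ = 2δ + (δζ + λ₁^{1/2})/(1 − δ). If u = v + w with v, w ∈ X, ‖v‖ ≤ δ‖w‖, and ‖T w‖ ≤ λ₁^t ‖w‖, then ‖T u‖ ≤ (λ₀ − 2δ)‖u‖. -/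
/-- Contraction estimate outside the largest cone:
`λ₁` is `lam1`, `λ₀` is `lam0`. -/
theorem stmt1 (X : Type*) [NormedAddCommGroup X] [NormedSpace ℝ X] [CompleteSpace X]
    (T : X →L[ℝ] X) (ζ : ℝ) (hζ : 0 < ζ) (hT : ‖T‖ ≤ ζ)
    (δ : ℝ) (hδ : 0 < δ) (hδ1 : δ < 1)
    (lam1 : ℝ) (hlam1 : 0 < lam1) (hlam1' : lam1 < 1)
    (t : ℝ) (ht : 1 / 2 ≤ t) (ht' : t ≤ 1)
    (lam0 : ℝ) (hlam0 : lam0 = 2 * δ + (δ * ζ + lam1 ^ ((1 : ℝ) / 2)) / (1 - δ))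
    (u v w : X) (huvw : u = v + w)
    (hv : ‖v‖ ≤ δ * ‖w‖) (hw : ‖T w‖ ≤ lam1 ^ t * ‖w‖) :
    ‖T u‖ ≤ (lam0 - 2 * δ) * ‖u‖ := by
  have h1δ : (0:ℝ) < 1 - δ := by linarith
  have hwnn : (0:ℝ) ≤ ‖w‖ := norm_nonneg w
  have hpow : lam1 ^ t ≤ lam1 ^ ((1:ℝ)/2) :=
    Real.rpow_le_rpow_of_exponent_ge hlam1 hlam1'.le ht
  have hpownn : (0:ℝ) ≤ lam1 ^ ((1:ℝ)/2) := Real.rpow_nonneg hlam1.le _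
  have hu : (1 - δ) * ‖w‖ ≤ ‖u‖ := by
    have h2 : ‖w‖ ≤ ‖u‖ + ‖v‖ := by
      have : w = u - v := by rw [huvw]; abel
      rw [this]; exact norm_sub_le u v
    nlinarith
  have hTv : ‖T v‖ ≤ ζ * (δ * ‖w‖) := by
    calc ‖T v‖ ≤ ‖T‖ * ‖v‖ := T.le_opNorm v
      _ ≤ ζ * (δ * ‖w‖) := by
          apply mul_le_mul hT hv (norm_nonneg v) hζ.le
  have hTu : ‖T u‖ ≤ (δ * ζ + lam1 ^ ((1:ℝ)/2)) * ‖w‖ := by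
    rw [huvw, map_add]
    calc ‖T v + T w‖ ≤ ‖T v‖ + ‖T w‖ := norm_add_le _ _
      _ ≤ ζ * (δ * ‖w‖) + lam1 ^ t * ‖w‖ := add_le_add hTv hw
      _ ≤ (δ * ζ + lam1 ^ ((1:ℝ)/2)) * ‖w‖ := by
          nlinarith [mul_le_mul_of_nonneg_right hpow hwnn]
  have hc : lam0 - 2 * δ = (δ * ζ + lam1 ^ ((1:ℝ)/2)) / (1 - δ) := by
    rw [hlam0]; ring
  rw [hc]
  have hcnn : (0:ℝ) ≤ (δ * ζ + lam1 ^ ((1:ℝ)/2)) / (1 - δ) := by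
    apply div_nonneg _ h1δ.le
    positivity
  calc ‖T u‖ ≤ (δ * ζ + lam1 ^ ((1:ℝ)/2)) * ‖w‖ := hTu
    _ = (δ * ζ + lam1 ^ ((1:ℝ)/2)) / (1 - δ) * ((1 - δ) * ‖w‖) := by
        field_simp
    _ ≤ (δ * ζ + lam1 ^ ((1:ℝ)/2)) / (1 - δ) * ‖u‖ :=
        mul_le_mul_of_nonneg_left hu hcnn
end

section
/- Let X be a real Banach space, Z a compact metric space, and z ↦ P_z a family of bounded linear projections on X (P_z ∘ P_z = P_z), continuous from Z into the space of bounded operators with the operator norm, each P_z having finite-dimensional range. Assume that range(P_{z₁}) ∩ ker(P_{z₂}) = {0} for all z₁, z₂ ∈ Z. Then there exists δ₀ > 0 such that for every 0 ≤ s ≤ δ₀ and every u ∈ X the following holds: if ‖(id − P_{z₁})u‖ ≤ s‖P_{z₁}u‖ for some z₁ ∈ Z and ‖P_{z₂}u‖ ≤ s‖(id − P_{z₂})u‖ for some z₂ ∈ Z, then u = 0. -/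
open Filter Topology

lemma key_unif (X : Type*) [NormedAddCommGroup X] [NormedSpace ℝ X]
    (Z : Type*) [MetricSpace Z] [CompactSpace Z]
    (P : Z → X →L[ℝ] X) (hP_cont : Continuous P)
    (hproj : ∀ z, (P z).comp (P z) = P z)
    (hfin : ∀ z, FiniteDimensional ℝ (LinearMap.range (P z : X →ₗ[ℝ] X)))
    (htrans : ∀ z₁ z₂, LinearMap.range (P z₁ : X →ₗ[ℝ] X) ⊓ LinearMap.ker (P z₂ : X →ₗ[ℝ] X) = ⊥) :
    ∃ c > (0 : ℝ), ∀ z₁ z₂ (u : X), c * ‖P z₁ u‖ ≤ ‖P z₂ (P z₁ u)‖ := by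
  by_contra hcon
  push_neg at hcon
  have h := fun n : ℕ => hcon (1 / ((n : ℝ) + 1)) (by positivity)
  choose z₁ z₂ u hu using h
  set v : ℕ → X := fun n => P (z₁ n) (u n) with hv
  have hvpos : ∀ n, 0 < ‖v n‖ := by
    intro n
    by_contra h'
    push_neg at h'
    have h0 : ‖v n‖ = 0 := le_antisymm h' (norm_nonneg _)
    have := hu n
    rw [h0, mul_zero] at this
    exact absurd (norm_nonneg _) (not_le.2 this)
  set w : ℕ → X := fun n => ‖v n‖⁻¹ • v n with hw
  have hwnorm : ∀ n, ‖w n‖ = 1 := by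
    intro n
    rw [hw]
    simp only [norm_smul, norm_inv, norm_norm]
    exact inv_mul_cancel₀ (hvpos n).ne'
  have hvfix : ∀ n, P (z₁ n) (v n) = v n := by
    intro n
    have := congrArg (fun f : X →L[ℝ] X => f (u n)) (hproj (z₁ n))
    simpa using this
  have hfix : ∀ n, P (z₁ n) (w n) = w n := by
    intro n
    rw [hw]
    simp only [map_smul, hvfix n]
  have hwsmall : ∀ n, ‖P (z₂ n) (w n)‖ < 1 / ((n : ℝ) + 1) := by
    intro n
    have h1 : ‖P (z₂ n) (w n)‖ = ‖v n‖⁻¹ * ‖P (z₂ n) (v n)‖ := by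
      rw [hw]; simp [norm_smul]
    rw [h1]
    calc ‖v n‖⁻¹ * ‖P (z₂ n) (v n)‖
        < ‖v n‖⁻¹ * (1 / ((n : ℝ) + 1) * ‖v n‖) :=
          mul_lt_mul_of_pos_left (hu n) (inv_pos.2 (hvpos n))
      _ = 1 / ((n : ℝ) + 1) := by
          rw [mul_comm (1 / ((n : ℝ) + 1)) ‖v n‖, ← mul_assoc,
            inv_mul_cancel₀ (hvpos n).ne', one_mul]
  obtain ⟨a, -, φ, hφ, ha⟩ := isCompact_univ.tendsto_subseq (fun n => Set.mem_univ (z₁ n))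
  obtain ⟨b, -, ψ, hψ, hb⟩ := isCompact_univ.tendsto_subseq (fun n => Set.mem_univ (z₂ (φ n)))
  haveI : FiniteDimensional ℝ (LinearMap.range (P a : X →ₗ[ℝ] X)) := hfin a
  set S := LinearMap.range (P a : X →ₗ[ℝ] X) with hS
  set y : ℕ → S := fun n => ⟨P a (w (φ (ψ n))), ⟨w (φ (ψ n)), rfl⟩⟩ with hy
  have hybdd : ∀ n, y n ∈ Metric.closedBall (0 : S) ‖P a‖ := by
    intro n
    rw [Metric.mem_closedBall, dist_zero_right]
    show ‖(y n : X)‖ ≤ ‖P a‖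
    calc ‖P a (w (φ (ψ n)))‖ ≤ ‖P a‖ * ‖w (φ (ψ n))‖ := (P a).le_opNorm _
      _ = ‖P a‖ := by rw [hwnorm, mul_one]
  obtain ⟨l, -, χ, hχ, hl⟩ := (isCompact_closedBall (0 : S) ‖P a‖).tendsto_subseq hybdd
  set W : ℕ → X := fun n => w (φ (ψ (χ n))) with hW
  have hidx : StrictMono (fun n => φ (ψ (χ n))) := hφ.comp (hψ.comp hχ)
  have hza : Tendsto (fun n => z₁ (φ (ψ (χ n)))) atTop (𝓝 a) :=
    ha.comp ((hψ.comp hχ).tendsto_atTop)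
  have hzb : Tendsto (fun n => z₂ (φ (ψ (χ n)))) atTop (𝓝 b) :=
    hb.comp (hχ.tendsto_atTop)
  have hPa : Tendsto (fun n => ‖P (z₁ (φ (ψ (χ n)))) - P a‖) atTop (𝓝 0) :=
    tendsto_iff_norm_sub_tendsto_zero.mp ((hP_cont.tendsto a).comp hza)
  have hWy : Tendsto (fun n => W n - (y (χ n) : X)) atTop (𝓝 0) := by
    rw [tendsto_zero_iff_norm_tendsto_zero]
    apply squeeze_zero (fun n => norm_nonneg _) _ hPa
    intro n
    have e1 : W n - (y (χ n) : X) = (P (z₁ (φ (ψ (χ n)))) - P a) (W n) := by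
      simp only [ContinuousLinearMap.sub_apply]
      rw [hfix]
    rw [e1]
    calc ‖(P (z₁ (φ (ψ (χ n)))) - P a) (W n)‖
        ≤ ‖P (z₁ (φ (ψ (χ n)))) - P a‖ * ‖W n‖ := ContinuousLinearMap.le_opNorm _ _
      _ = ‖P (z₁ (φ (ψ (χ n)))) - P a‖ := by rw [hW]; simp [hwnorm]
  have hycoe : Tendsto (fun n => (y (χ n) : X)) atTop (𝓝 (l : X)) :=
    (continuous_subtype_val.tendsto l).comp hl
  have hWlim : Tendsto W atTop (𝓝 (l : X)) := by
    have := hycoe.add hWy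
    simpa using this
  have hlnorm : ‖(l : X)‖ = 1 := by
    have h1 : Tendsto (fun n => ‖W n‖) atTop (𝓝 ‖(l : X)‖) := hWlim.norm
    have h2 : Tendsto (fun n => ‖W n‖) atTop (𝓝 1) := by
      simp only [hW, hwnorm]
      exact tendsto_const_nhds
    exact tendsto_nhds_unique h1 h2
  have hPbl : P b (l : X) = 0 := by
    have happ : Tendsto (fun n => P (z₂ (φ (ψ (χ n)))) (W n)) atTop (𝓝 (P b (l : X))) := by
      have hop : Tendsto (fun n => P (z₂ (φ (ψ (χ n))))) atTop (𝓝 (P b)) :=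
        (hP_cont.tendsto b).comp hzb
      exact (isBoundedBilinearMap_apply.continuous.tendsto (P b, (l : X))).comp
        (hop.prodMk_nhds hWlim)
    have h2 : Tendsto (fun n => ‖P (z₂ (φ (ψ (χ n)))) (W n)‖) atTop (𝓝 0) := by
      apply squeeze_zero (fun n => norm_nonneg _) _ tendsto_one_div_add_atTop_nhds_zero_nat
      intro n
      have hle : (n : ℝ) + 1 ≤ (φ (ψ (χ n)) : ℝ) + 1 := by
        exact_mod_cast add_le_add_left (Nat.cast_le.2 hidx.le_apply) 1
      calc ‖P (z₂ (φ (ψ (χ n)))) (W n)‖ ≤ 1 / ((φ (ψ (χ n)) : ℝ) + 1) :=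
            (hwsmall _).le
        _ ≤ 1 / ((n : ℝ) + 1) := one_div_le_one_div_of_le (by positivity) hle
    have : ‖P b (l : X)‖ = 0 := tendsto_nhds_unique happ.norm h2
    exact norm_eq_zero.mp this
  have hmem : (l : X) ∈ LinearMap.range (P a : X →ₗ[ℝ] X) ⊓ LinearMap.ker (P b : X →ₗ[ℝ] X) := ⟨l.2, hPbl⟩
  rw [htrans a b, Submodule.mem_bot] at hmem
  rw [hmem] at hlnorm
  simp at hlnorm


/-- The cone neighborhood 𝒞(s) and the complementary cone neighborhood 𝒟(s) of a
continuous family of finite-rank projections with transverse ranges/kernels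
intersect only in 0, for all sufficiently small `s`. -/
theorem stmt2 (X : Type*) [NormedAddCommGroup X] [NormedSpace ℝ X] [CompleteSpace X]
    (Z : Type*) [MetricSpace Z] [CompactSpace Z]
    (P : Z → X →L[ℝ] X) (hP_cont : Continuous P)
    (hproj : ∀ z, (P z).comp (P z) = P z)
    (hfin : ∀ z, FiniteDimensional ℝ (LinearMap.range (P z : X →ₗ[ℝ] X)))
    (htrans : ∀ z₁ z₂, LinearMap.range (P z₁ : X →ₗ[ℝ] X) ⊓ LinearMap.ker (P z₂ : X →ₗ[ℝ] X) = ⊥) :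
    ∃ δ₀ > (0 : ℝ), ∀ s : ℝ, 0 ≤ s → s ≤ δ₀ → ∀ u : X,
      (∃ z₁, ‖u - P z₁ u‖ ≤ s * ‖P z₁ u‖) →
      (∃ z₂, ‖P z₂ u‖ ≤ s * ‖u - P z₂ u‖) → u = 0 := by
  by_cases hZ : Nonempty Z
  swap
  · refine ⟨1, one_pos, fun s _ _ u h₁ _ => ?_⟩
    obtain ⟨z₁, -⟩ := h₁
    exact absurd (Nonempty.intro z₁) hZ
  -- uniform bound on the operator norms
  obtain ⟨z₀, -, hz₀⟩ := isCompact_univ.exists_isMaxOn Set.univ_nonempty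
    (hP_cont.norm.continuousOn)
  set M := ‖P z₀‖ with hMdef
  have hM : ∀ z, ‖P z‖ ≤ M := fun z => hz₀ (Set.mem_univ z)
  have hM0 : 0 ≤ M := le_trans (norm_nonneg _) (hM z₀)
  obtain ⟨c, hc, hkey⟩ := key_unif X Z P hP_cont hproj hfin htrans
  set K : ℝ := 3 * M + 2 with hKdef
  have hK : 0 < K := by positivity
  refine ⟨min 1 (c / (2 * K)), lt_min one_pos (by positivity), fun s hs0 hsδ u h₁ h₂ => ?_⟩
  obtain ⟨z₁, h₁⟩ := h₁
  obtain ⟨z₂, h₂⟩ := h₂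
  have hs1 : s ≤ 1 := hsδ.trans (min_le_left _ _)
  have hsc : s ≤ c / (2 * K) := hsδ.trans (min_le_right _ _)
  set v : X := P z₁ u with hvdef
  have hc1 : c * ‖v‖ ≤ ‖P z₂ v‖ := hkey z₁ z₂ u
  have e1 : ‖P z₂ v - P z₂ u‖ ≤ M * (s * ‖v‖) := by
    calc ‖P z₂ v - P z₂ u‖ = ‖P z₂ (v - u)‖ := by rw [map_sub]
      _ ≤ ‖P z₂‖ * ‖v - u‖ := (P z₂).le_opNorm _
      _ ≤ M * ‖v - u‖ := mul_le_mul_of_nonneg_right (hM z₂) (norm_nonneg _)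
      _ = M * ‖u - v‖ := by rw [norm_sub_rev]
      _ ≤ M * (s * ‖v‖) := mul_le_mul_of_nonneg_left h₁ hM0
  have e3 : ‖u‖ ≤ 2 * ‖v‖ := by
    have htri : ‖u‖ ≤ ‖u - v‖ + ‖v‖ := by
      have := norm_add_le (u - v) v
      simpa using this
    have h2 : s * ‖v‖ ≤ ‖v‖ := by nlinarith [norm_nonneg v]
    linarith [h₁]
  have e2 : ‖P z₂ u‖ ≤ s * (1 + M) * (2 * ‖v‖) := by
    have hPu : ‖P z₂ u‖ ≤ M * ‖u‖ := (P z₂).le_of_opNorm_le (hM z₂) u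
    have h3 : ‖u - P z₂ u‖ ≤ (1 + M) * ‖u‖ := by
      calc ‖u - P z₂ u‖ ≤ ‖u‖ + ‖P z₂ u‖ := norm_sub_le _ _
        _ ≤ (1 + M) * ‖u‖ := by nlinarith
    calc ‖P z₂ u‖ ≤ s * ‖u - P z₂ u‖ := h₂
      _ ≤ s * ((1 + M) * ‖u‖) := mul_le_mul_of_nonneg_left h3 hs0
      _ ≤ s * (1 + M) * (2 * ‖v‖) := by
          rw [mul_assoc]
          exact mul_le_mul_of_nonneg_left
            (mul_le_mul_of_nonneg_left e3 (by linarith)) hs0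
  have hchain : c * ‖v‖ ≤ s * K * ‖v‖ := by
    have htri : ‖P z₂ v‖ ≤ ‖P z₂ u‖ + ‖P z₂ v - P z₂ u‖ := by
      have := norm_add_le (P z₂ u) (P z₂ v - P z₂ u)
      simpa using this
    have hring : s * (1 + M) * (2 * ‖v‖) + M * (s * ‖v‖) = s * K * ‖v‖ := by
      rw [hKdef]; ring
    linarith [hc1, htri, e1, e2]
  have hvz : ‖v‖ = 0 := by
    have hmul : s * K * ‖v‖ ≤ (c / 2) * ‖v‖ :=
      mul_le_mul_of_nonneg_right (by
        calc s * K ≤ (c / (2 * K)) * K := mul_le_mul_of_nonneg_right hsc hK.le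
          _ = c / 2 := by field_simp) (norm_nonneg v)
    have hfin2 : c * ‖v‖ ≤ (c / 2) * ‖v‖ := le_trans hchain hmul
    have hle : ‖v‖ ≤ 0 := by nlinarith [norm_nonneg v]
    exact le_antisymm hle (norm_nonneg v)
  have hu0 : ‖u‖ = 0 := by
    have := e3
    rw [hvz] at this
    have := norm_nonneg u
    linarith
  exact norm_eq_zero.mp hu0
end

section
/- Let X be a real Banach space, Z a nonempty compact metric space, k a positive integer, and z ↦ P_z a norm-continuous family of bounded linear projections on X, each with range of dimension exactly k, such that range(P_{z₁}) ∩ ker(P_{z₂}) = {0} for all z₁, z₂ ∈ Z. Then there exists δ₀ > 0 such that for every 0 < s ≤ δ₀ the set 𝒞(s) = {u ∈ X : there exists z ∈ Z with ‖(id − P_z)u‖ ≤ s‖P_z u‖} is a k-cone; explicitly: (i) 𝒞(s) is closed in X; (ii) λ·𝒞(s) = 𝒞(s) for every real λ ≠ 0; (iii) 𝒞(s) contains the k-dimensional subspace range(P_z) for every z ∈ Z; and (iv) for every z₀ ∈ Z the closed subspace ker(P_z₀), which has codimension k in X, satisfies 𝒞(s) ∩ ker(P_{z₀}) = {0}. 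-/

lemma ptwise {X : Type*} [NormedAddCommGroup X] [NormedSpace ℝ X]
    (Q R : X →L[ℝ] X) [FiniteDimensional ℝ (LinearMap.range (Q : X →ₗ[ℝ] X))]
    (hpos : 0 < Module.finrank ℝ (LinearMap.range (Q : X →ₗ[ℝ] X)))
    (htriv : LinearMap.range (Q : X →ₗ[ℝ] X) ⊓ LinearMap.ker (R : X →ₗ[ℝ] X) = ⊥) :
    ∃ c > 0, ∀ v ∈ LinearMap.range (Q : X →ₗ[ℝ] X), c * ‖v‖ ≤ ‖R v‖ := by
  set E := LinearMap.range (Q : X →ₗ[ℝ] X)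
  haveI : Nontrivial E := Module.nontrivial_of_finrank_pos hpos
  have hsph : (Metric.sphere (0 : E) 1).Nonempty :=
    NormedSpace.sphere_nonempty.mpr (by norm_num)
  have hcomp : IsCompact (Metric.sphere (0 : E) 1) := isCompact_sphere 0 1
  have hcont : Continuous fun v : E => ‖R v‖ :=
    (R.continuous.comp continuous_subtype_val).norm
  obtain ⟨v₀, hv₀, hmin⟩ := hcomp.exists_isMinOn hsph hcont.continuousOn
  have hv₀n : ‖(v₀ : X)‖ = 1 := by simpa using mem_sphere_zero_iff_norm.mp hv₀
  have hpos' : 0 < ‖R (v₀ : X)‖ := by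
    rcases (norm_nonneg (R (v₀ : X))).lt_or_eq with h | h
    · exact h
    · exfalso
      have h0 : R (v₀ : X) = 0 := by
        have := h.symm
        simpa [norm_eq_zero] using this
      have : (v₀ : X) ∈ E ⊓ LinearMap.ker (R : X →ₗ[ℝ] X) := ⟨v₀.2, h0⟩
      rw [htriv] at this
      simp only [Submodule.mem_bot] at this
      rw [this] at hv₀n; simp at hv₀n
  refine ⟨‖R (v₀ : X)‖, hpos', fun v hv => ?_⟩
  rcases eq_or_ne v 0 with rfl | hvne
  · simp
  · have hn : ‖v‖ ≠ 0 := norm_ne_zero_iff.mpr hvne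
    set w : E := ⟨‖v‖⁻¹ • v, E.smul_mem _ hv⟩
    have hw : w ∈ Metric.sphere (0 : E) 1 := by
      have : ‖(w : X)‖ = 1 := by
        simp [w, norm_smul, abs_of_nonneg (inv_nonneg.mpr (norm_nonneg v)),
          inv_mul_cancel₀ hn]
      simpa [mem_sphere_zero_iff_norm] using this
    have := hmin hw
    simp only [Set.mem_setOf_eq] at this
    have h2 : ‖R ((w : X))‖ = ‖v‖⁻¹ * ‖R v‖ := by
      simp [w, map_smul, norm_smul, abs_of_nonneg (inv_nonneg.mpr (norm_nonneg v))]
    rw [h2] at this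
    have hnp : 0 < ‖v‖ := (norm_nonneg v).lt_of_ne' hn
    calc ‖R (v₀ : X)‖ * ‖v‖ ≤ (‖v‖⁻¹ * ‖R v‖) * ‖v‖ := by nlinarith
    _ = ‖R v‖ := by field_simp

lemma unif {X : Type*} [NormedAddCommGroup X] [NormedSpace ℝ X]
    {Z : Type*} [MetricSpace Z] [CompactSpace Z] [Nonempty Z]
    (P : Z → X →L[ℝ] X) (hP_cont : Continuous P)
    (hproj : ∀ z, (P z).comp (P z) = P z)
    (M : ℝ) (hM : ∀ z, ‖P z‖ ≤ M) (hM0 : 0 ≤ M)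
    (c : Z × Z → ℝ) (hcpos : ∀ p, 0 < c p)
    (hc : ∀ p : Z × Z, ∀ v ∈ LinearMap.range (P p.1 : X →ₗ[ℝ] X), c p * ‖v‖ ≤ ‖P p.2 v‖) :
    ∃ c₀ > 0, ∀ z z₀ : Z, ∀ v ∈ LinearMap.range (P z : X →ₗ[ℝ] X), c₀ * ‖v‖ ≤ ‖P z₀ v‖ := by
  set ε : Z × Z → ℝ := fun p => c p / (2 * (c p + M + 1)) with hε
  have hεpos : ∀ p, 0 < ε p := fun p => by
    have := hcpos p; positivity
  set U : Z × Z → Set (Z × Z) :=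
    fun p => {q | ‖P q.1 - P p.1‖ < ε p ∧ ‖P q.2 - P p.2‖ < ε p} with hU
  have hUopen : ∀ p, IsOpen (U p) := by
    intro p
    have h1 : Continuous fun q : Z × Z => ‖P q.1 - P p.1‖ :=
      ((hP_cont.comp continuous_fst).sub continuous_const).norm
    have h2 : Continuous fun q : Z × Z => ‖P q.2 - P p.2‖ :=
      ((hP_cont.comp continuous_snd).sub continuous_const).norm
    exact (isOpen_lt h1 continuous_const).inter (isOpen_lt h2 continuous_const)
  have hUmem : ∀ p, p ∈ U p := fun p => by
    constructor <;> simpa using hεpos p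
  -- key local estimate
  have key : ∀ p q, q ∈ U p → ∀ v ∈ LinearMap.range (P q.1 : X →ₗ[ℝ] X), c p / 2 * ‖v‖ ≤ ‖P q.2 v‖ := by
    intro p q hq v hv
    obtain ⟨x, hx⟩ := hv
    have hfix : P q.1 v = v := by
      rw [← hx]
      have := congrArg (fun f : X →L[ℝ] X => f x) (hproj q.1)
      simpa using this
    set w : X := P p.1 v with hwdef
    have hw_mem : w ∈ LinearMap.range (P p.1 : X →ₗ[ℝ] X) := ⟨v, rfl⟩
    have hvw : ‖v - w‖ ≤ ε p * ‖v‖ := by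
      have : v - w = (P q.1 - P p.1) v := by simp [hwdef, hfix]
      rw [this]
      calc ‖(P q.1 - P p.1) v‖ ≤ ‖P q.1 - P p.1‖ * ‖v‖ := (P q.1 - P p.1).le_opNorm v
      _ ≤ ε p * ‖v‖ := by
          apply mul_le_mul_of_nonneg_right hq.1.le (norm_nonneg v)
    have h1 : c p * ‖w‖ ≤ ‖P p.2 w‖ := hc p w hw_mem
    have h2 : ‖P p.2 v - P p.2 w‖ ≤ M * (ε p * ‖v‖) := by
      calc ‖P p.2 v - P p.2 w‖ = ‖P p.2 (v - w)‖ := by rw [map_sub]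
      _ ≤ ‖P p.2‖ * ‖v - w‖ := (P p.2).le_opNorm _
      _ ≤ M * (ε p * ‖v‖) := by
          apply mul_le_mul (hM p.2) hvw (norm_nonneg _) hM0
    have h3 : ‖P q.2 v - P p.2 v‖ ≤ ε p * ‖v‖ := by
      calc ‖P q.2 v - P p.2 v‖ = ‖(P q.2 - P p.2) v‖ := by simp
      _ ≤ ‖P q.2 - P p.2‖ * ‖v‖ := (P q.2 - P p.2).le_opNorm v
      _ ≤ ε p * ‖v‖ := mul_le_mul_of_nonneg_right hq.2.le (norm_nonneg v)
    have hwlb : ‖v‖ - ε p * ‖v‖ ≤ ‖w‖ := by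
      have := norm_sub_norm_le v w
      linarith [this, hvw]
    have l1 : ‖P p.2 v‖ ≥ ‖P p.2 w‖ - M * (ε p * ‖v‖) := by
      have := norm_sub_norm_le (P p.2 w) (P p.2 v)
      have h2' : ‖P p.2 w - P p.2 v‖ ≤ M * (ε p * ‖v‖) := by
        rw [norm_sub_rev]; exact h2
      linarith
    have l2 : ‖P q.2 v‖ ≥ ‖P p.2 v‖ - ε p * ‖v‖ := by
      have := norm_sub_norm_le (P p.2 v) (P q.2 v)
      have h3' : ‖P p.2 v - P q.2 v‖ ≤ ε p * ‖v‖ := by rw [norm_sub_rev]; exact h3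
      linarith
    have hεeq : (c p + M + 1) * ε p = c p / 2 := by
      have h : c p + M + 1 > 0 := by have := hcpos p; linarith
      rw [show ε p = c p / (2 * (c p + M + 1)) from rfl]
      field_simp
    have hcp := hcpos p
    have hvnn := norm_nonneg v
    nlinarith [mul_le_mul_of_nonneg_left hwlb hcp.le]
  -- compactness
  obtain ⟨t, ht⟩ := isCompact_univ.elim_finite_subcover U hUopen
    (fun q _ => Set.mem_iUnion.mpr ⟨q, hUmem q⟩)
  have htne : t.Nonempty := by
    by_contra h
    rw [Finset.not_nonempty_iff_eq_empty] at h
    have := ht (Set.mem_univ (Classical.arbitrary (Z × Z)))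
    simp [h] at this
  refine ⟨t.inf' htne (fun p => c p / 2), ?_, ?_⟩
  · rw [gt_iff_lt, Finset.lt_inf'_iff]
    intro p _
    have := hcpos p; linarith
  · intro z z₀ v hv
    obtain ⟨p, hpt, hqp⟩ := Set.mem_iUnion₂.mp (ht (Set.mem_univ (z, z₀)))
    have hle : t.inf' htne (fun p => c p / 2) ≤ c p / 2 := Finset.inf'_le _ hpt
    calc t.inf' htne (fun p => c p / 2) * ‖v‖ ≤ c p / 2 * ‖v‖ :=
      mul_le_mul_of_nonneg_right hle (norm_nonneg v)
    _ ≤ ‖P z₀ v‖ := key p (z, z₀) hqp v hv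


/-- For sufficiently small `s`, the set 𝒞(s) = ⋃_z {u : ‖(id−P_z)u‖ ≤ s‖P_z u‖}
is a k-cone: it is closed, scaling invariant, contains the k-dimensional ranges,
and meets each kernel (a k-codimensional closed subspace) only in 0. -/
theorem stmt3 (X : Type*) [NormedAddCommGroup X] [NormedSpace ℝ X] [CompleteSpace X]
    (Z : Type*) [MetricSpace Z] [CompactSpace Z] [Nonempty Z]
    (k : ℕ) (hk : 0 < k)
    (P : Z → X →L[ℝ] X) (hP_cont : Continuous P)
    (hproj : ∀ z, (P z).comp (P z) = P z)
    (hfin : ∀ z, FiniteDimensional ℝ (LinearMap.range (P z : X →ₗ[ℝ] X)))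
    (hdim : ∀ z, Module.finrank ℝ (LinearMap.range (P z : X →ₗ[ℝ] X)) = k)
    (htrans : ∀ z₁ z₂, LinearMap.range (P z₁ : X →ₗ[ℝ] X) ⊓ LinearMap.ker (P z₂ : X →ₗ[ℝ] X) = ⊥) :
    ∃ δ₀ > (0 : ℝ), ∀ s : ℝ, 0 < s → s ≤ δ₀ →
      IsClosed {u : X | ∃ z, ‖u - P z u‖ ≤ s * ‖P z u‖} ∧
      (∀ lam : ℝ, lam ≠ 0 →
        (fun u : X => lam • u) '' {u : X | ∃ z, ‖u - P z u‖ ≤ s * ‖P z u‖}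
          = {u : X | ∃ z, ‖u - P z u‖ ≤ s * ‖P z u‖}) ∧
      (∀ z, (LinearMap.range (P z : X →ₗ[ℝ] X) : Set X) ⊆ {u : X | ∃ z', ‖u - P z' u‖ ≤ s * ‖P z' u‖}) ∧
      ∀ z₀, {u : X | ∃ z, ‖u - P z u‖ ≤ s * ‖P z u‖} ∩ (LinearMap.ker (P z₀ : X →ₗ[ℝ] X) : Set X) = {0} ∧
        Module.finrank ℝ (X ⧸ LinearMap.ker (P z₀ : X →ₗ[ℝ] X)) = k := by
  -- fixed point property of ranges
  have hfix : ∀ z (u : X), u ∈ LinearMap.range (P z : X →ₗ[ℝ] X) → P z u = u := by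
    rintro z u ⟨x, rfl⟩
    have := congrArg (fun f : X →L[ℝ] X => f x) (hproj z)
    simpa using this
  -- uniform bound on operator norms
  obtain ⟨zM, -, hmax⟩ := isCompact_univ.exists_isMaxOn Set.univ_nonempty
    (hP_cont.norm.continuousOn)
  set M := ‖P zM‖ with hMdef
  have hM : ∀ z, ‖P z‖ ≤ M := fun z => hmax (Set.mem_univ z)
  have hM0 : 0 ≤ M := norm_nonneg _
  -- pointwise lower bounds
  have hA : ∀ p : Z × Z, ∃ c > 0, ∀ v ∈ LinearMap.range (P p.1 : X →ₗ[ℝ] X), c * ‖v‖ ≤ ‖P p.2 v‖ := by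
    intro p
    haveI := hfin p.1
    exact ptwise (P p.1) (P p.2) (by rw [hdim]; exact hk) (htrans p.1 p.2)
  choose c hc using hA
  obtain ⟨c₀, hc₀, hbd⟩ := unif P hP_cont hproj M hM hM0 c (fun p => (hc p).1)
    (fun p => (hc p).2)
  refine ⟨c₀ / (2 * (M + 1)), by positivity, fun s hs hsδ => ?_⟩
  refine ⟨?_, ?_, ?_, ?_⟩
  · -- closed
    have heq : {u : X | ∃ z, ‖u - P z u‖ ≤ s * ‖P z u‖} =
        Prod.snd '' {p : Z × X | ‖p.2 - P p.1 p.2‖ ≤ s * ‖P p.1 p.2‖} := by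
      ext u
      simp only [Set.mem_setOf_eq, Set.mem_image, Prod.exists]
      constructor
      · rintro ⟨z, hz⟩; exact ⟨z, u, hz, rfl⟩
      · rintro ⟨z, u', hu', rfl⟩; exact ⟨z, hu'⟩
    rw [heq]
    apply isClosedMap_snd_of_compactSpace
    have hcontPu : Continuous fun p : Z × X => P p.1 p.2 :=
      isBoundedBilinearMap_apply.continuous.comp
        ((hP_cont.comp continuous_fst).prodMk continuous_snd)
    exact isClosed_le ((continuous_snd.sub hcontPu).norm)
      (continuous_const.mul hcontPu.norm)
  · -- scaling
    have hsmul : ∀ (lam : ℝ) (u : X), u ∈ {u : X | ∃ z, ‖u - P z u‖ ≤ s * ‖P z u‖} →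
        lam • u ∈ {u : X | ∃ z, ‖u - P z u‖ ≤ s * ‖P z u‖} := by
      rintro lam u ⟨z, hz⟩
      refine ⟨z, ?_⟩
      have h1 : lam • u - P z (lam • u) = lam • (u - P z u) := by
        rw [map_smul]; rw [smul_sub]
      rw [h1, map_smul, norm_smul, norm_smul]
      rw [mul_left_comm]
      exact mul_le_mul_of_nonneg_left hz (abs_nonneg lam)
    intro lam hlam
    apply Set.Subset.antisymm
    · rintro _ ⟨u, hu, rfl⟩
      exact hsmul lam u hu
    · intro u hu
      exact ⟨lam⁻¹ • u, hsmul lam⁻¹ u hu, by simp [smul_smul, mul_inv_cancel₀ hlam]⟩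
  · -- ranges contained
    intro z u hu
    refine ⟨z, ?_⟩
    rw [hfix z u hu]
    simp only [sub_self, norm_zero]
    positivity
  · -- kernels
    intro z₀
    constructor
    · ext u
      simp only [Set.mem_inter_iff, Set.mem_setOf_eq, SetLike.mem_coe,
        Set.mem_singleton_iff]
      constructor
      · rintro ⟨⟨z, hz⟩, hker⟩
        have hker' : P z₀ u = 0 := hker
        set v := P z u with hv
        have hvr : v ∈ LinearMap.range (P z : X →ₗ[ℝ] X) := ⟨u, rfl⟩
        have h1 : c₀ * ‖v‖ ≤ ‖P z₀ v‖ := hbd z z₀ v hvr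
        have h2 : ‖P z₀ v‖ ≤ M * (s * ‖v‖) := by
          have : P z₀ v = P z₀ (v - u) := by rw [map_sub, hker', sub_zero]
          rw [this]
          calc ‖P z₀ (v - u)‖ ≤ ‖P z₀‖ * ‖v - u‖ := (P z₀).le_opNorm _
          _ ≤ M * (s * ‖v‖) := by
              rw [norm_sub_rev]
              exact mul_le_mul (hM z₀) hz (norm_nonneg _) hM0
        have hsM : M * s < c₀ := by
          have h3 : s * (2 * (M + 1)) ≤ c₀ :=
            (le_div_iff₀ (by positivity : (0:ℝ) < 2 * (M + 1))).mp hsδ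
          nlinarith
        have hv0 : ‖v‖ = 0 := by nlinarith [norm_nonneg v]
        have : v = 0 := norm_eq_zero.mp hv0
        have hu0 : ‖u - v‖ ≤ 0 := by
          calc ‖u - v‖ = ‖u - P z u‖ := rfl
          _ ≤ s * ‖P z u‖ := hz
          _ = s * ‖v‖ := rfl
          _ = 0 := by rw [hv0, mul_zero]
        have : ‖u - v‖ = 0 := le_antisymm hu0 (norm_nonneg _)
        have : u = v := by rwa [norm_sub_eq_zero_iff] at this
        rw [this]; assumption
      · rintro rfl
        exact ⟨⟨Classical.arbitrary Z, by simp⟩, Submodule.zero_mem _⟩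
    · haveI := hfin z₀
      exact ((LinearMap.quotKerEquivRange ((P z₀ : X →ₗ[ℝ] X))).finrank_eq).trans
        (hdim z₀)
end

section
/- Let X be a real Banach space, Z a compact metric space, z ↦ R_z a norm-continuous family of bounded linear projections on X, each with finite-dimensional range, and let 𝓗 ⊆ X be a closed linear subspace such that range(R_z) ∩ 𝓗 = {0} for every z ∈ Z. Then there exists δ₁ > 0 such that the only u ∈ 𝓗 satisfying ‖(id − R_z)u‖ ≤ δ₁ ‖R_z u‖ for some z ∈ Z is u = 0. -/
open Filter Topology Metric Bornology

/-- For a single finite-rank projection (any operator with finite-dimensional range)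
whose range meets the closed subspace `H` trivially, `id - T` is bounded below on `H`. -/
lemma aux_fixed {X : Type*} [NormedAddCommGroup X] [NormedSpace ℝ X]
    (T : X →L[ℝ] X) (hfin : FiniteDimensional ℝ (LinearMap.range (T : X →ₗ[ℝ] X)))
    (H : Submodule ℝ X) (hH : IsClosed (H : Set X))
    (htrans : LinearMap.range (T : X →ₗ[ℝ] X) ⊓ H = ⊥) :
    ∃ c > 0, ∀ u ∈ H, c * ‖u‖ ≤ ‖u - T u‖ := by
  by_contra hcon
  push_neg at hcon
  have key : ∀ n : ℕ, ∃ w : X, w ∈ H ∧ ‖w‖ = 1 ∧ ‖w - T w‖ < 1 / (n + 1) := by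
    intro n
    obtain ⟨u, huH, hu⟩ := hcon (1 / (n + 1)) (by positivity)
    have hu0 : u ≠ 0 := by
      rintro rfl
      simp at hu
    have hnorm : 0 < ‖u‖ := norm_pos_iff.mpr hu0
    refine ⟨‖u‖⁻¹ • u, H.smul_mem _ huH, ?_, ?_⟩
    · simp [norm_smul, abs_of_pos hnorm, inv_mul_cancel₀ hnorm.ne']
    · have heq : ‖u‖⁻¹ • u - T (‖u‖⁻¹ • u) = ‖u‖⁻¹ • (u - T u) := by
        rw [map_smul, smul_sub]
      rw [heq, norm_smul, Real.norm_eq_abs, abs_inv, abs_of_pos hnorm,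
        inv_mul_lt_iff₀ hnorm]
      calc ‖u - T u‖ < 1 / (n + 1) * ‖u‖ := hu
        _ = ‖u‖ * (1 / (n + 1)) := by ring
  choose w hwH hwn hws using key
  set V := LinearMap.range (T : X →ₗ[ℝ] X) with hV
  haveI : FiniteDimensional ℝ V := hfin
  let v : ℕ → V := fun n => ⟨T (w n), LinearMap.mem_range_self _ _⟩
  have hvb : ∀ n, v n ∈ Metric.closedBall (0 : V) 2 := by
    intro n
    rw [Metric.mem_closedBall, dist_zero_right]
    have h1 : ‖T (w n)‖ ≤ ‖w n‖ + ‖w n - T (w n)‖ := by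
      calc ‖T (w n)‖ = ‖w n - (w n - T (w n))‖ := by rw [sub_sub_cancel]
        _ ≤ ‖w n‖ + ‖w n - T (w n)‖ := norm_sub_le _ _
    have h2 : (1 : ℝ) / (n + 1) ≤ 1 := by
      rw [div_le_one (by positivity)]; linarith [Nat.cast_nonneg (α := ℝ) n]
    have : ‖(v n : X)‖ ≤ 2 := by
      have := (hws n).le
      simp only [v]
      linarith [hwn n ▸ h1, hwn n]
    exact this
  obtain ⟨a, _, φ, hφ, hlim⟩ := tendsto_subseq_of_bounded
    (Metric.isBounded_closedBall (x := (0 : V)) (r := 2)) hvb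
  have hz : Tendsto (fun n => w (φ n) - T (w (φ n))) atTop (𝓝 0) := by
    refine squeeze_zero_norm (fun n => ?_)
      tendsto_one_div_add_atTop_nhds_zero_nat
    refine (hws (φ n)).le.trans ?_
    have hφn : (n : ℝ) ≤ φ n := by exact_mod_cast hφ.le_apply
    apply div_le_div_of_nonneg_left one_pos.le (by positivity)
    linarith
  have hlimX : Tendsto (fun n => w (φ n)) atTop (𝓝 (a : X)) := by
    have h2 : Tendsto (fun n => ((v (φ n)) : X)) atTop (𝓝 (a : X)) :=
      (continuous_subtype_val.tendsto a).comp hlim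
    have : Tendsto (fun n => (w (φ n) - T (w (φ n))) + ((v (φ n)) : X)) atTop
        (𝓝 (0 + (a : X))) := hz.add h2
    simpa [v] using this
  have haH : (a : X) ∈ H := hH.mem_of_tendsto hlimX
    (Eventually.of_forall fun n => hwH _)
  have hna : ‖(a : X)‖ = 1 := by
    have h1 : Tendsto (fun n => ‖w (φ n)‖) atTop (𝓝 ‖(a : X)‖) :=
      (continuous_norm.tendsto _).comp hlimX
    have h2 : Tendsto (fun n => ‖w (φ n)‖) atTop (𝓝 1) := by
      simp only [hwn]; exact tendsto_const_nhds
    exact tendsto_nhds_unique h1 h2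
  have : (a : X) ∈ V ⊓ H := ⟨a.2, haH⟩
  rw [htrans, Submodule.mem_bot] at this
  rw [this] at hna
  simp at hna

/-- A closed subspace 𝓗 transverse to the ranges of a continuous family of
finite-rank projections stays away from the cones 𝒲(δ₁) for small δ₁. -/
theorem stmt6 (X : Type*) [NormedAddCommGroup X] [NormedSpace ℝ X] [CompleteSpace X]
    (Z : Type*) [MetricSpace Z] [CompactSpace Z]
    (R : Z → X →L[ℝ] X) (hR_cont : Continuous R)
    (hproj : ∀ z, (R z).comp (R z) = R z)
    (hfin : ∀ z, FiniteDimensional ℝ (LinearMap.range (R z : X →ₗ[ℝ] X)))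
    (H : Submodule ℝ X) (hH : IsClosed (H : Set X))
    (htrans : ∀ z, LinearMap.range (R z : X →ₗ[ℝ] X) ⊓ H = ⊥) :
    ∃ δ₁ > (0 : ℝ), ∀ u ∈ H, (∃ z, ‖u - R z u‖ ≤ δ₁ * ‖R z u‖) → u = 0 := by
  rcases isEmpty_or_nonempty Z with hZ | hZ
  · exact ⟨1, one_pos, fun u hu ⟨z, _⟩ => (IsEmpty.false z).elim⟩
  have hfix : ∀ z, ∃ c > 0, ∀ u ∈ H, c * ‖u‖ ≤ ‖u - R z u‖ :=
    fun z => aux_fixed (R z) (hfin z) H hH (htrans z)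
  choose c hc hclow using hfix
  have hcover : (Set.univ : Set Z) ⊆ ⋃ z, {z' | ‖R z' - R z‖ < c z / 2} := by
    intro z _
    exact Set.mem_iUnion.mpr ⟨z, by simp [hc z, half_pos (hc z)]⟩
  obtain ⟨t, ht⟩ := isCompact_univ.elim_finite_subcover
    (fun z => {z' | ‖R z' - R z‖ < c z / 2})
    (fun z => isOpen_lt ((hR_cont.sub continuous_const).norm) continuous_const)
    hcover
  have htne : t.Nonempty := by
    obtain ⟨z⟩ := hZ
    obtain ⟨i, hi, -⟩ := Set.mem_iUnion₂.mp (ht (Set.mem_univ z))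
    exact ⟨i, hi⟩
  set c₀ : ℝ := t.inf' htne (fun z => c z / 2) with hc₀
  have hc₀pos : 0 < c₀ := by
    rw [hc₀]
    apply Finset.lt_inf'_iff _ |>.mpr
    intro z _
    exact half_pos (hc z)
  have huniform : ∀ z', ∀ u ∈ H, c₀ * ‖u‖ ≤ ‖u - R z' u‖ := by
    intro z' u huH
    obtain ⟨i, hi, hz'⟩ := Set.mem_iUnion₂.mp (ht (Set.mem_univ z'))
    have hz' : ‖R z' - R i‖ < c i / 2 := hz'
    have h1 : c i * ‖u‖ ≤ ‖u - R i u‖ := hclow i u huH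
    have h2 : ‖R i u - R z' u‖ ≤ c i / 2 * ‖u‖ := by
      calc ‖R i u - R z' u‖ = ‖(R i - R z') u‖ := by simp
        _ ≤ ‖R i - R z'‖ * ‖u‖ := (R i - R z').le_opNorm u
        _ ≤ c i / 2 * ‖u‖ := by
            apply mul_le_mul_of_nonneg_right _ (norm_nonneg u)
            rw [← norm_neg]; simpa using hz'.le
    have h3 : ‖u - R i u‖ ≤ ‖u - R z' u‖ + ‖R i u - R z' u‖ := by
      calc ‖u - R i u‖ = ‖(u - R z' u) - (R i u - R z' u)‖ := by abel_nf
        _ ≤ ‖u - R z' u‖ + ‖R i u - R z' u‖ := norm_sub_le _ _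
    have h4 : c₀ ≤ c i / 2 := Finset.inf'_le _ hi
    nlinarith [norm_nonneg u]
  refine ⟨min (c₀ / 4) (1 / 2), lt_min (by positivity) (by norm_num),
    fun u huH ⟨z, hz⟩ => ?_⟩
  set δ := min (c₀ / 4) (1 / 2) with hδ
  have hδ1 : δ ≤ 1 / 2 := min_le_right _ _
  have hδ2 : δ ≤ c₀ / 4 := min_le_left _ _
  have hδpos : 0 < δ := lt_min (by positivity) (by norm_num)
  have hRu : ‖R z u‖ ≤ 2 * ‖u‖ := by
    have h1 : ‖R z u‖ ≤ ‖u‖ + ‖u - R z u‖ := by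
      calc ‖R z u‖ = ‖u - (u - R z u)‖ := by rw [sub_sub_cancel]
        _ ≤ ‖u‖ + ‖u - R z u‖ := norm_sub_le _ _
    nlinarith [norm_nonneg (R z u), norm_nonneg u]
  have h5 : c₀ * ‖u‖ ≤ ‖u - R z u‖ := huniform z u huH
  have h6 : ‖u - R z u‖ ≤ δ * (2 * ‖u‖) :=
    hz.trans (mul_le_mul_of_nonneg_left hRu hδpos.le)
  have : ‖u‖ ≤ 0 := by nlinarith [norm_nonneg u]
  exact norm_le_zero_iff.mp this
end

section
/- Let X be a real Banach space, Z a nonempty compact metric space, z ↦ P_z a norm-continuous family of bounded linear projections on X with finite-dimensional ranges, and z ↦ T_z a norm-continuous family of bounded linear operators on X such that for every z ∈ Z the restriction of T_z to range(P_z) is injective. Then there exists a constant c > 0 such that ‖T_z u‖ ≥ c‖u‖ for every z ∈ Z and every u ∈ range(P_z). -/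
/-- Uniform lower bound for a continuous family of operators injective on the
finite-dimensional ranges of a continuous family of projections. -/
theorem stmt7 (X : Type*) [NormedAddCommGroup X] [NormedSpace ℝ X] [CompleteSpace X]
    (Z : Type*) [MetricSpace Z] [CompactSpace Z] [Nonempty Z]
    (P : Z → X →L[ℝ] X) (hP_cont : Continuous P)
    (hproj : ∀ z, (P z).comp (P z) = P z)
    (hfin : ∀ z, FiniteDimensional ℝ (LinearMap.range (P z : X →ₗ[ℝ] X)))
    (T : Z → X →L[ℝ] X) (hT_cont : Continuous T)
    (hinj : ∀ z, Set.InjOn (fun u => T z u) (LinearMap.range (P z : X →ₗ[ℝ] X) : Set X)) :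
    ∃ c > (0 : ℝ), ∀ z, ∀ u ∈ LinearMap.range (P z : X →ₗ[ℝ] X), c * ‖u‖ ≤ ‖T z u‖ := by
  classical
  -- membership in the range is equivalent to being a fixed point of the projection
  have hmem : ∀ (z : Z) (u : X), u ∈ LinearMap.range (P z : X →ₗ[ℝ] X) ↔ P z u = u := by
    intro z u
    constructor
    · rintro ⟨w, rfl⟩
      have := ContinuousLinearMap.ext_iff.mp (hproj z) w
      simpa using this
    · intro h; exact ⟨u, h⟩
  set K : Set (Z × X) := {p | P p.1 p.2 = p.2 ∧ ‖p.2‖ = 1} with hKdef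
  have happ : Continuous fun p : Z × X => P p.1 p.2 :=
    (hP_cont.comp continuous_fst).clm_apply continuous_snd
  have hKclosed : IsClosed K := by
    have h1 : IsClosed {p : Z × X | P p.1 p.2 = p.2} := isClosed_eq happ continuous_snd
    have h2 : IsClosed {p : Z × X | ‖p.2‖ = 1} :=
      isClosed_eq (continuous_norm.comp continuous_snd) continuous_const
    exact h1.inter h2
  -- K is totally bounded
  have hKtb : TotallyBounded K := by
    rw [Metric.totallyBounded_iff]
    intro ε hε
    set ε' := min ε 1 with hε'def
    have hε'0 : 0 < ε' := lt_min hε one_pos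
    have hε'ε : ε' ≤ ε := min_le_left _ _
    have hε'1 : ε' ≤ 1 := min_le_right _ _
    obtain ⟨δ, hδ0, hδ⟩ := Metric.uniformContinuous_iff.mp
      (CompactSpace.uniformContinuous_of_continuous hP_cont) (ε' / 4) (by positivity)
    set δ' := min δ ε' with hδ'def
    have hδ'0 : 0 < δ' := lt_min hδ0 hε'0
    obtain ⟨s, -, hsfin, hscov⟩ :=
      finite_cover_balls_of_compact (isCompact_univ (X := Z)) hδ'0
    -- for each z, a finite (ε'/2)-net of the ball of radius 2 in the range of P z
    have hnet : ∀ z : Z, ∃ t : Set X, t.Finite ∧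
        (Subtype.val '' (Metric.closedBall (0 : LinearMap.range (P z : X →ₗ[ℝ] X)) 2)) ⊆
          ⋃ y ∈ t, Metric.ball y (ε' / 2) := by
      intro z
      haveI := hfin z
      have hc : IsCompact (Subtype.val ''
          (Metric.closedBall (0 : LinearMap.range (P z : X →ₗ[ℝ] X)) 2)) :=
        (isCompact_closedBall _ _).image continuous_subtype_val
      exact Metric.totallyBounded_iff.mp hc.totallyBounded (ε' / 2) (by positivity)
    choose t ht using hnet
    refine ⟨⋃ z ∈ s, ({z} ×ˢ t z), hsfin.biUnion fun z _ => (Set.finite_singleton z).prod (ht z).1, ?_⟩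
    rintro ⟨z, u⟩ ⟨hPu, hu1⟩
    obtain ⟨zi, hzi, hzball⟩ := Set.mem_iUnion₂.mp (hscov (Set.mem_univ z))
    have hdzzi : dist z zi < δ' := Metric.mem_ball.mp hzball
    have hPdist : ‖P z - P zi‖ < ε' / 4 := by
      have := hδ (lt_of_lt_of_le hdzzi (min_le_left _ _))
      rwa [dist_eq_norm] at this
    -- `P zi u` is close to `u` and lies in the ball of radius 2 of range (P zi)
    have hclose : ‖u - P zi u‖ < ε' / 4 := by
      calc ‖u - P zi u‖ = ‖(P z - P zi) u‖ := by
            rw [ContinuousLinearMap.sub_apply, hPu]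
        _ ≤ ‖P z - P zi‖ * ‖u‖ := (P z - P zi).le_opNorm u
        _ = ‖P z - P zi‖ := by rw [hu1, mul_one]
        _ < ε' / 4 := hPdist
    have hPzile : ‖P zi u‖ ≤ 2 := by
      have h1 : ‖P zi u‖ ≤ ‖u‖ + ‖u - P zi u‖ := by
        have h1' := norm_sub_le u (u - P zi u)
        rwa [sub_sub_cancel] at h1'
      have h2 : ε' / 4 ≤ 1 := by linarith
      calc ‖P zi u‖ ≤ ‖u‖ + ‖u - P zi u‖ := h1
        _ ≤ 1 + ε' / 4 := by rw [hu1]; linarith [hclose.le]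
        _ ≤ 2 := by linarith
    have hmemball : P zi u ∈ Subtype.val ''
        (Metric.closedBall (0 : LinearMap.range (P zi : X →ₗ[ℝ] X)) 2) := by
      refine ⟨⟨P zi u, LinearMap.mem_range_self _ u⟩, ?_, rfl⟩
      rw [Metric.mem_closedBall, dist_zero_right]
      exact hPzile
    obtain ⟨v, hv, hvball⟩ := Set.mem_iUnion₂.mp ((ht zi).2 hmemball)
    have hduv : dist u v < ε' := by
      calc dist u v ≤ dist u (P zi u) + dist (P zi u) v := dist_triangle _ _ _
        _ < ε' / 4 + ε' / 2 := by
            refine add_lt_add ?_ (Metric.mem_ball.mp hvball)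
            rw [dist_eq_norm]; exact hclose
        _ ≤ ε' := by linarith
    refine Set.mem_iUnion₂.mpr ⟨(zi, v), ?_, ?_⟩
    · exact Set.mem_iUnion₂.mpr ⟨zi, hzi, ⟨rfl, hv⟩⟩
    · rw [Metric.mem_ball, Prod.dist_eq]
      exact max_lt (lt_of_lt_of_le (lt_of_lt_of_le hdzzi (min_le_right _ _)) hε'ε)
        (lt_of_lt_of_le hduv hε'ε)
  have hKcompact : IsCompact K := TotallyBounded.isCompact_of_isClosed hKtb hKclosed
  have gcont : Continuous fun p : Z × X => ‖T p.1 p.2‖ :=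
    ((hT_cont.comp continuous_fst).clm_apply continuous_snd).norm
  -- auxiliary: nonzero elements of the range give points of K after normalization
  have hKmem : ∀ (z : Z) (u : X), u ∈ LinearMap.range (P z : X →ₗ[ℝ] X) → u ≠ 0 →
      (z, ‖u‖⁻¹ • u) ∈ K := by
    intro z u hu hu0
    have hn : ‖u‖ ≠ 0 := norm_ne_zero_iff.mpr hu0
    constructor
    · rw [map_smul, (hmem z u).mp hu]
    · rw [norm_smul, norm_inv, norm_norm, inv_mul_cancel₀ hn]
  rcases K.eq_empty_or_nonempty with hKe | hKne
  · -- no unit vectors: every range is trivial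
    refine ⟨1, one_pos, ?_⟩
    intro z u hu
    by_cases hu0 : u = 0
    · simp [hu0]
    · exact absurd (hKmem z u hu hu0) (by simp [hKe])
  · obtain ⟨p₀, hp₀, hminp⟩ := hKcompact.exists_isMinOn hKne gcont.continuousOn
    have hp₀range : p₀.2 ∈ LinearMap.range (P p₀.1 : X →ₗ[ℝ] X) := (hmem _ _).mpr hp₀.1
    have hc0 : 0 < ‖T p₀.1 p₀.2‖ := by
      rcases (norm_nonneg (T p₀.1 p₀.2)).lt_or_eq with h | h
      · exact h
      · exfalso
        have hT0 : T p₀.1 p₀.2 = 0 := by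
          have := h.symm
          rwa [norm_eq_zero] at this
        have h0mem : (0 : X) ∈ (LinearMap.range (P p₀.1 : X →ₗ[ℝ] X) : Set X) :=
          Submodule.zero_mem _
        have h20 := hinj p₀.1 hp₀range h0mem (by simpa using hT0)
        have hp₀2 : ‖p₀.2‖ = 1 := hp₀.2
        rw [h20, norm_zero] at hp₀2
        exact zero_ne_one hp₀2
    refine ⟨‖T p₀.1 p₀.2‖, hc0, ?_⟩
    intro z u hu
    by_cases hu0 : u = 0
    · simp [hu0]
    · have hn : (0 : ℝ) < ‖u‖ := norm_pos_iff.mpr hu0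
      have hKu := hKmem z u hu hu0
      have hle : ‖T p₀.1 p₀.2‖ ≤ ‖T z (‖u‖⁻¹ • u)‖ := hminp hKu
      have heq : ‖T z (‖u‖⁻¹ • u)‖ = ‖u‖⁻¹ * ‖T z u‖ := by
        rw [map_smul, norm_smul, norm_inv, norm_norm]
      rw [heq] at hle
      have := mul_le_mul_of_nonneg_right hle hn.le
      rwa [mul_comm ‖u‖⁻¹ ‖T z u‖, mul_assoc, inv_mul_cancel₀ hn.ne', mul_one] at this
end

section
/- Let u : [0,1] → ℝ be continuous and let v : [0,1] → ℝ be given by v(x) = c(eˣ + e^{−x}) + ∫₀ˣ (e^{y−x} − e^{x−y})/2 · u(y) dy with c = ∫₀¹ (e^{2−y} + e^{y})/(2(e² − 1)) · u(y) dy. Then sup_{x∈[0,1]} |v(x)| ≤ (3e² − e)/(2(e − 1)) · sup_{x∈[0,1]} |u(x)|. -/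
open Real Set

/-- Sup-norm bound for the solution of the Neumann problem v'' − v + u = 0. -/
theorem stmt10 (u : ℝ → ℝ) (hu : ContinuousOn u (Set.Icc 0 1))
    (c : ℝ)
    (hc : c = ∫ y in (0:ℝ)..1, (Real.exp (2 - y) + Real.exp y) / (2 * (Real.exp 2 - 1)) * u y)
    (v : ℝ → ℝ)
    (hv : ∀ x, v x = c * (Real.exp x + Real.exp (-x)) +
      ∫ y in (0:ℝ)..x, (Real.exp (y - x) - Real.exp (x - y)) / 2 * u y) :
    sSup ((fun x => |v x|) '' Set.Icc (0:ℝ) 1) ≤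
      (3 * Real.exp 2 - Real.exp 1) / (2 * (Real.exp 1 - 1)) *
        sSup ((fun x => |u x|) '' Set.Icc (0:ℝ) 1) := by
  set E := Real.exp 1 with hEdef
  have hE2 : (2:ℝ) < E := by
    have := Real.exp_one_gt_d9
    simp only [← hEdef] at this
    linarith
  have hexp2 : Real.exp 2 = E ^ 2 := by
    rw [hEdef, sq, ← Real.exp_add]; norm_num
  set M := sSup ((fun x => |u x|) '' Set.Icc (0:ℝ) 1) with hMdef
  have hbdd : BddAbove ((fun x => |u x|) '' Set.Icc (0:ℝ) 1) :=
    isCompact_Icc.bddAbove_image hu.abs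
  have hMle : ∀ y ∈ Set.Icc (0:ℝ) 1, |u y| ≤ M := fun y hy =>
    le_csSup hbdd ⟨y, hy, rfl⟩
  have hM0 : 0 ≤ M := le_trans (abs_nonneg (u 0)) (hMle 0 ⟨le_refl 0, zero_le_one⟩)
  have hden : (0:ℝ) < 2 * (E ^ 2 - 1) := by nlinarith
  set K : ℝ := (E ^ 2 + E) / (2 * (E ^ 2 - 1)) with hKdef
  have hK0 : 0 ≤ K := div_nonneg (by nlinarith) hden.le
  -- bound on c
  have hcb : |c| ≤ K * M := by
    rw [hc]
    have h := intervalIntegral.norm_integral_le_of_norm_le_const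
      (a := (0:ℝ)) (b := 1) (C := K * M)
      (f := fun y => (Real.exp (2 - y) + Real.exp y) / (2 * (Real.exp 2 - 1)) * u y) ?_
    · simpa using h
    · intro y hy
      rw [Set.uIoc_of_le zero_le_one] at hy
      have hy0 : 0 < y := hy.1
      have hy1 : y ≤ 1 := hy.2
      rw [Real.norm_eq_abs, abs_mul, hexp2]
      have h1 : Real.exp (2 - y) ≤ E ^ 2 := by
        rw [← hexp2]; exact Real.exp_le_exp.mpr (by linarith)
      have h2 : Real.exp y ≤ E := Real.exp_le_exp.mpr hy1
      have hnn : 0 ≤ (Real.exp (2 - y) + Real.exp y) / (2 * (E ^ 2 - 1)) :=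
        div_nonneg (by positivity) hden.le
      rw [abs_of_nonneg hnn]
      have hle : (Real.exp (2 - y) + Real.exp y) / (2 * (E ^ 2 - 1)) ≤ K := by
        rw [hKdef]; gcongr
      exact mul_le_mul hle (hMle y ⟨hy0.le, hy1⟩) (abs_nonneg _) hK0
  -- pointwise bound on v
  have hvb : ∀ x ∈ Set.Icc (0:ℝ) 1,
      |v x| ≤ (3 * E ^ 2 - E) / (2 * (E - 1)) * M := by
    intro x hx
    obtain ⟨hx0, hx1⟩ := hx
    have hI : ‖∫ y in (0:ℝ)..x, (Real.exp (y - x) - Real.exp (x - y)) / 2 * u y‖ ≤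
        (E / 2 * M) * |x - 0| := by
      apply intervalIntegral.norm_integral_le_of_norm_le_const
      intro y hy
      rw [Set.uIoc_of_le hx0] at hy
      have hy0 : 0 < y := hy.1
      have hyx : y ≤ x := hy.2
      have hA : Real.exp (y - x) ≤ E := Real.exp_le_exp.mpr (by linarith)
      have hB : Real.exp (x - y) ≤ E := Real.exp_le_exp.mpr (by linarith)
      have hA0 : 0 < Real.exp (y - x) := Real.exp_pos _
      have hB0 : 0 < Real.exp (x - y) := Real.exp_pos _
      have habs : |(Real.exp (y - x) - Real.exp (x - y)) / 2| ≤ E / 2 := by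
        rw [abs_div, abs_two]
        gcongr
        rw [abs_sub_le_iff]
        constructor <;> linarith
      rw [Real.norm_eq_abs, abs_mul]
      exact mul_le_mul habs (hMle y ⟨hy0.le, le_trans hyx hx1⟩) (abs_nonneg _)
        (by positivity)
    rw [Real.norm_eq_abs] at hI
    have hxabs : |x - 0| = x := by rw [sub_zero, abs_of_nonneg hx0]
    rw [hxabs] at hI
    have hecosh : Real.exp x + Real.exp (-x) ≤ E + 1 := by
      have h1 : Real.exp x ≤ E := Real.exp_le_exp.mpr hx1
      have h2 : Real.exp (-x) ≤ 1 := Real.exp_le_one_iff.mpr (by linarith)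
      linarith
    have hcosh0 : 0 < Real.exp x + Real.exp (-x) := by positivity
    have hstep : |v x| ≤ K * M * (E + 1) + E / 2 * M * x := by
      rw [hv x]
      calc |c * (Real.exp x + Real.exp (-x)) +
            ∫ y in (0:ℝ)..x, (Real.exp (y - x) - Real.exp (x - y)) / 2 * u y|
          ≤ |c * (Real.exp x + Real.exp (-x))| +
            |∫ y in (0:ℝ)..x, (Real.exp (y - x) - Real.exp (x - y)) / 2 * u y| :=
            abs_add_le _ _
        _ ≤ K * M * (E + 1) + E / 2 * M * x := by
            apply add_le_add _ hI
            rw [abs_mul, abs_of_nonneg hcosh0.le]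
            exact mul_le_mul hcb hecosh hcosh0.le (by positivity)
    have hconst : K * M * (E + 1) + E / 2 * M * x ≤
        (3 * E ^ 2 - E) / (2 * (E - 1)) * M := by
      have hx' : E / 2 * M * x ≤ E / 2 * M := by
        nlinarith [mul_nonneg (by positivity : (0:ℝ) ≤ E / 2) hM0]
      have hkey : K * (E + 1) + E / 2 ≤ (3 * E ^ 2 - E) / (2 * (E - 1)) := by
        have h1 : (0:ℝ) < E - 1 := by linarith
        have h2 : (0:ℝ) < E ^ 2 - 1 := by nlinarith
        have hKeq : K = E / (2 * (E - 1)) := by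
          rw [hKdef, div_eq_div_iff hden.ne' (by positivity)]
          ring
        rw [hKeq, div_mul_eq_mul_div,
          div_add_div _ _ (by positivity) (two_ne_zero),
          div_le_div_iff₀ (by positivity) (by positivity)]
        nlinarith [sq_nonneg E, sq_nonneg (E - 1), sq_nonneg (E + 1), mul_pos h1 h2]
      nlinarith [mul_le_mul_of_nonneg_right hkey hM0]
    linarith
  -- conclude
  apply Real.sSup_le
  · rintro z ⟨x, hx, rfl⟩
    rw [← hexp2] at hvb
    exact hvb x hx
  · apply mul_nonneg _ hM0
    apply div_nonneg _ (by nlinarith)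
    rw [hexp2]; nlinarith
end

section
/- Let f : ℝ × [0,1] × ℝ × ℝ → ℝ be continuous and continuously differentiable in its last two arguments, and suppose there are constants ξ, M₀, η₀ > 0 such that f(t,x,u,p) ≤ −ξu + M₀ whenever u ≥ 0 and |p| ≤ η₀, and f(t,x,u,p) ≥ −ξu − M₀ whenever u ≤ 0 and |p| ≤ η₀ (for all t ∈ ℝ, x ∈ [0,1]). Let c : ℝ × [0,1] → ℝ and ν : [0,1] → ℝ be continuous and bounded, with ‖c‖∞ = sup |c| and ‖ν‖∞ = sup |ν|, and let ε ≥ 0 satisfy ε‖c‖∞‖ν‖∞ < ξ; set M* = M₀/(ξ − ε‖c‖∞‖ν‖∞). Then every classical solution U of the nonlocal problem U_t = U_xx + f(t,x,U,U_x) + ε c(t,x) ∫₀¹ ν(y) U(t,y) dy on (0,∞) × [0,1], with Neumann boundary conditions U_x(t,0) = U_x(t,1) = 0 for t > 0, satisfies limsup_{t→∞} max_{x∈[0,1]} |U(t,x)| ≤ M*. -/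
open Set Filter Topology


/-- Second derivative test at a max on [0,1] (derivative at the max point vanishes). -/
lemma sd_nonpos (g g' : ℝ → ℝ) (x c2 : ℝ) (hx : x ∈ Set.Icc (0:ℝ) 1)
    (hg' : ∀ y ∈ Set.Icc (0:ℝ) 1, HasDerivWithinAt g (g' y) (Set.Icc 0 1) y)
    (hg'' : HasDerivWithinAt g' c2 (Set.Icc 0 1) x)
    (hmax : ∀ y ∈ Set.Icc (0:ℝ) 1, g y ≤ g x)
    (h0 : g' x = 0) : c2 ≤ 0 := by
  by_contra hpos
  push_neg at hpos
  have hcont : ContinuousOn g (Set.Icc 0 1) := fun y hy => (hg' y hy).continuousWithinAt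
  rw [hasDerivWithinAt_iff_tendsto_slope] at hg''
  have hev : ∀ᶠ y in 𝓝[Set.Icc (0:ℝ) 1 \ {x}] x, 0 < slope g' x y :=
    hg''.eventually (eventually_gt_nhds hpos)
  rw [Filter.Eventually] at hev
  rw [Metric.mem_nhdsWithin_iff] at hev
  obtain ⟨r, hr, hball⟩ := hev
  have hslope : ∀ z, z ∈ Set.Icc (0:ℝ) 1 → z ≠ x → |z - x| < r → 0 < slope g' x z := by
    intro z hz hzx hd
    exact hball ⟨by simpa [Real.dist_eq] using hd, ⟨hz, hzx⟩⟩
  rcases lt_or_ge x 1 with hx1 | hx1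
  · -- right side: g' > 0 on (x, b)
    set b := min (x + r / 2) 1 with hb
    have hxb : x < b := lt_min (by linarith) hx1
    have hb1 : b ≤ 1 := min_le_right _ _
    have hb0 : 0 ≤ x := hx.1
    have hgpos : ∀ z ∈ Set.Ioo x b, 0 < g' z := by
      intro z hz
      have hzI : z ∈ Set.Icc (0:ℝ) 1 := ⟨le_trans hb0 hz.1.le, le_trans hz.2.le hb1⟩
      have hd : |z - x| < r := by
        rw [abs_of_pos (by linarith [hz.1] : (0:ℝ) < z - x)]
        have : z < x + r / 2 := lt_of_lt_of_le hz.2 (min_le_left _ _)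
        linarith
      have h1 := hslope z hzI hz.1.ne' hd
      rw [slope_def_field, h0, sub_zero] at h1
      have hzx : 0 < z - x := by linarith [hz.1]
      have := mul_pos h1 hzx
      rwa [div_mul_cancel₀ _ hzx.ne'] at this
    obtain ⟨z, hz, hzs⟩ := exists_hasDerivAt_eq_slope g g' hxb
      (hcont.mono (Set.Icc_subset_Icc hb0 hb1))
      (fun y hy => (hg' y ⟨le_trans hb0 hy.1.le, le_trans hy.2.le hb1⟩).hasDerivAt
        (Icc_mem_nhds (lt_of_le_of_lt hb0 hy.1) (lt_of_lt_of_le hy.2 hb1)))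
    have hgz := hgpos z hz
    rw [hzs] at hgz
    have : 0 < g b - g x := by
      have := mul_pos hgz (by linarith : (0:ℝ) < b - x)
      rwa [div_mul_cancel₀ _ (by linarith : (b:ℝ) - x ≠ 0)] at this
    have := hmax b ⟨le_trans hb0 hxb.le, hb1⟩
    linarith
  · -- x = 1 case: left side, g' < 0 on (a, x)
    have hx0 : 0 < x := lt_of_lt_of_le one_pos hx1
    set a := max (x - r / 2) 0 with ha
    have hax : a < x := max_lt (by linarith) hx0
    have ha0 : 0 ≤ a := le_max_right _ _
    have hgneg : ∀ z ∈ Set.Ioo a x, g' z < 0 := by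
      intro z hz
      have hzI : z ∈ Set.Icc (0:ℝ) 1 := ⟨le_trans ha0 hz.1.le, le_trans hz.2.le hx.2⟩
      have hd : |z - x| < r := by
        rw [abs_of_neg (by linarith [hz.2] : z - x < (0:ℝ))]
        have : x - r / 2 ≤ a := le_max_left _ _
        have := hz.1
        linarith
      have h1 := hslope z hzI hz.2.ne hd
      rw [slope_def_field, h0, sub_zero] at h1
      have hzx : z - x < 0 := by linarith [hz.2]
      by_contra hc
      push_neg at hc
      have : g' z / (z - x) ≤ 0 := div_nonpos_of_nonneg_of_nonpos hc hzx.le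
      linarith
    obtain ⟨z, hz, hzs⟩ := exists_hasDerivAt_eq_slope g g' hax
      (hcont.mono (Set.Icc_subset_Icc ha0 hx.2))
      (fun y hy => (hg' y ⟨le_trans ha0 hy.1.le, le_trans hy.2.le hx.2⟩).hasDerivAt
        (Icc_mem_nhds (lt_of_le_of_lt ha0 hy.1) (lt_of_lt_of_le hy.2 hx.2)))
    have hgz := hgneg z hz
    rw [hzs] at hgz
    have : g x - g a < 0 := by
      have := mul_neg_of_neg_of_pos hgz (by linarith : (0:ℝ) < x - a)
      rwa [div_mul_cancel₀ _ (by linarith : (x:ℝ) - a ≠ 0)] at this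
    have := hmax a ⟨ha0, le_trans hax.le hx.2⟩
    linarith

/-- At a first touching point of a space-time barrier, we get a contradiction. -/
lemma no_touch (g g' : ℝ → ℝ) (c2 φ' : ℝ) (φ m : ℝ → ℝ)
    (κ M₀ δ A t' x' : ℝ)
    (hκ : 0 < κ) (hδ : 0 < δ) (hA : 0 ≤ A) (hM₀ : 0 < M₀)
    (hm : m = fun t => A * Real.exp (-κ * (t - 1)) + (M₀ / κ + δ))
    (ht' : 1 < t') (hx' : x' ∈ Set.Icc (0:ℝ) 1)
    (hg' : ∀ y ∈ Set.Icc (0:ℝ) 1, HasDerivWithinAt g (g' y) (Set.Icc 0 1) y)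
    (hg'' : HasDerivWithinAt g' c2 (Set.Icc 0 1) x')
    (hbc : g' 0 = 0 ∧ g' 1 = 0)
    (hmax : ∀ y ∈ Set.Icc (0:ℝ) 1, g y ≤ g x')
    (hgx : g x' = m t')
    (hφ : HasDerivAt φ φ' t')
    (hφless : ∀ t ∈ Set.Ico (1:ℝ) t', φ t ≤ m t)
    (hφt : φ t' = m t')
    (heq2 : g' x' = 0 → φ' ≤ c2 - κ * m t' + M₀) : False := by
  -- derivative of g vanishes at the max point
  have hg'x : g' x' = 0 := by
    rcases eq_or_lt_of_le hx'.1 with h | h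
    · rw [← h]; exact hbc.1
    rcases eq_or_lt_of_le hx'.2 with h1 | h1
    · rw [h1]; exact hbc.2
    · have hd : HasDerivAt g (g' x') x' := (hg' x' hx').hasDerivAt (Icc_mem_nhds h h1)
      have hlm : IsLocalMax g x' :=
        (isMaxOn_iff.mpr hmax).isLocalMax (Icc_mem_nhds h h1)
      exact hlm.hasDerivAt_eq_zero hd
  have hc2 : c2 ≤ 0 := sd_nonpos g g' x' c2 hx' hg' hg'' hmax hg'x
  -- derivative of the barrier
  have hE : (0:ℝ) < Real.exp (-κ * (t' - 1)) := Real.exp_pos _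
  set E := Real.exp (-κ * (t' - 1)) with hEdef
  have hm' : HasDerivAt m (A * (E * -κ)) t' := by
    rw [hm]
    have h1 : HasDerivAt (fun t : ℝ => -κ * (t - 1)) (-κ * 1) t' :=
      ((hasDerivAt_id t').sub_const 1).const_mul (-κ)
    rw [mul_one] at h1
    exact ((h1.exp).const_mul A).add_const _
  -- φ' ≥ m'
  have hψ : HasDerivAt (fun t => φ t - m t) (φ' - A * (E * -κ)) t' := hφ.sub hm'
  rw [hasDerivAt_iff_tendsto_slope] at hψ
  have hT : Tendsto (slope (fun t => φ t - m t) t') (𝓝[<] t') (𝓝 (φ' - A * (E * -κ))) :=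
    hψ.mono_left (nhdsWithin_mono _ (fun y hy => (ne_of_lt hy : y ≠ t')))
  have hIoo : Set.Ioo (1:ℝ) t' ∈ 𝓝[<] t' := Ioo_mem_nhdsLT_of_mem ⟨ht', le_refl _⟩
  have hslopepos : ∀ᶠ t in 𝓝[<] t', 0 ≤ slope (fun t => φ t - m t) t' t := by
    filter_upwards [hIoo] with t ht
    have h1 : φ t - m t ≤ 0 := sub_nonpos.mpr (hφless t ⟨ht.1.le, ht.2⟩)
    have h2 : φ t' - m t' = 0 := by rw [hφt]; ring
    rw [slope_def_field, h2, sub_zero]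
    exact div_nonneg_of_nonpos h1 (by linarith [ht.2])
  have hge : 0 ≤ φ' - A * (E * -κ) := ge_of_tendsto hT hslopepos
  -- final contradiction
  have hfin := heq2 hg'x
  have hmt' : m t' = A * E + (M₀ / κ + δ) := by rw [hm]
  have hMκ : κ * (M₀ / κ) = M₀ := mul_div_cancel₀ _ hκ.ne'
  nlinarith [mul_pos hκ hδ, mul_nonneg hA hE.le]

/-- Ultimate sup-norm bound for classical solutions of the nonlocal parabolic
equation `U_t = U_xx + f(t,x,U,U_x) + ε c(t,x) ∫₀¹ ν U` with Neumann boundary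
conditions, under the dissipativity condition on `f`. -/
theorem stmt11
    (f : ℝ → ℝ → ℝ → ℝ → ℝ)
    (hf_cont : Continuous fun q : ℝ × ℝ × ℝ × ℝ => f q.1 q.2.1 q.2.2.1 q.2.2.2)
    (hf_smooth : ∀ t x, ContDiff ℝ 1 fun q : ℝ × ℝ => f t x q.1 q.2)
    (ξ M₀ η₀ : ℝ) (hξ : 0 < ξ) (hM₀ : 0 < M₀) (hη₀ : 0 < η₀)
    (hdiss₁ : ∀ t : ℝ, ∀ x ∈ Set.Icc (0:ℝ) 1, ∀ w p : ℝ,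
      0 ≤ w → |p| ≤ η₀ → f t x w p ≤ -ξ * w + M₀)
    (hdiss₂ : ∀ t : ℝ, ∀ x ∈ Set.Icc (0:ℝ) 1, ∀ w p : ℝ,
      w ≤ 0 → |p| ≤ η₀ → -ξ * w - M₀ ≤ f t x w p)
    (c : ℝ → ℝ → ℝ) (ν : ℝ → ℝ)
    (hc_cont : Continuous fun q : ℝ × ℝ => c q.1 q.2) (hν_cont : Continuous ν)
    (normc normν : ℝ) (hcb : ∀ t x, |c t x| ≤ normc) (hνb : ∀ x, |ν x| ≤ normν)
    (ε : ℝ) (hε : 0 ≤ ε) (hsmall : ε * normc * normν < ξ)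
    (Mstar : ℝ) (hMstar : Mstar = M₀ / (ξ - ε * normc * normν))
    (U Ut Ux Uxx : ℝ → ℝ → ℝ)
    (hU_cont : ContinuousOn (fun q : ℝ × ℝ => U q.1 q.2) (Set.Ici 0 ×ˢ Set.Icc 0 1))
    (hUt : ∀ t > (0:ℝ), ∀ x ∈ Set.Icc (0:ℝ) 1, HasDerivAt (fun s => U s x) (Ut t x) t)
    (hUx : ∀ t > (0:ℝ), ∀ x ∈ Set.Icc (0:ℝ) 1,
      HasDerivWithinAt (fun y => U t y) (Ux t x) (Set.Icc 0 1) x)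
    (hUxx : ∀ t > (0:ℝ), ∀ x ∈ Set.Icc (0:ℝ) 1,
      HasDerivWithinAt (fun y => Ux t y) (Uxx t x) (Set.Icc 0 1) x)
    (hderiv_cont : ContinuousOn
      (fun q : ℝ × ℝ => (Ut q.1 q.2, Ux q.1 q.2, Uxx q.1 q.2)) (Set.Ioi 0 ×ˢ Set.Icc 0 1))
    (heq : ∀ t > (0:ℝ), ∀ x ∈ Set.Icc (0:ℝ) 1,
      Ut t x = Uxx t x + f t x (U t x) (Ux t x) +
        ε * c t x * ∫ y in (0:ℝ)..1, ν y * U t y)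
    (hbc : ∀ t > (0:ℝ), Ux t 0 = 0 ∧ Ux t 1 = 0) :
    Filter.limsup (fun t => sSup ((fun x => |U t x|) '' Set.Icc (0:ℝ) 1)) Filter.atTop
      ≤ Mstar := by
  have hν0 : 0 ≤ normν := le_trans (abs_nonneg _) (hνb 0)
  have hc0 : 0 ≤ normc := le_trans (abs_nonneg _) (hcb 0 0)
  set κ := ξ - ε * normc * normν with hκdef
  have hκ : 0 < κ := sub_pos.mpr hsmall
  have hεnn : 0 ≤ ε * normc * normν := mul_nonneg (mul_nonneg hε hc0) hν0
  have hMs : Mstar = M₀ / κ := hMstar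
  have hMspos : 0 < Mstar := by rw [hMs]; exact div_pos hM₀ hκ
  -- bound at time 1
  have hslice1 : ContinuousOn (fun x => U 1 x) (Set.Icc 0 1) := by
    have : ContinuousOn ((fun q : ℝ × ℝ => U q.1 q.2) ∘ (fun x : ℝ => ((1:ℝ), x)))
        (Set.Icc 0 1) := by
      apply hU_cont.comp (Continuous.continuousOn (by continuity))
      intro x hx
      exact ⟨by norm_num, hx⟩
    exact this
  obtain ⟨C, hC⟩ := isCompact_Icc.exists_bound_of_continuousOn hslice1
  set A := max C 0 with hAdef
  have hA : 0 ≤ A := le_max_right _ _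
  have hA1 : ∀ x ∈ Set.Icc (0:ℝ) 1, |U 1 x| ≤ A := fun x hx =>
    le_trans (by simpa using hC x hx) (le_max_left _ _)
  -- main barrier bound
  have main : ∀ δ > (0:ℝ), ∀ t₁, 1 ≤ t₁ → ∀ x ∈ Set.Icc (0:ℝ) 1,
      |U t₁ x| ≤ A * Real.exp (-κ * (t₁ - 1)) + (M₀ / κ + δ) := by
    intro δ hδ t₁ ht₁ x₀ hx₀
    by_contra hcon
    push_neg at hcon
    set m : ℝ → ℝ := fun t => A * Real.exp (-κ * (t - 1)) + (M₀ / κ + δ) with hmdef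
    have hmcont : Continuous m := by
      rw [hmdef]; fun_prop
    have hmpos : ∀ t, 0 < m t := fun t =>
      add_pos_of_nonneg_of_pos (mul_nonneg hA (Real.exp_pos _).le)
        (add_pos (div_pos hM₀ hκ) hδ)
    set K : Set (ℝ × ℝ) := Set.Icc 1 t₁ ×ˢ Set.Icc 0 1 with hK
    have hKsub : K ⊆ Set.Ici 0 ×ˢ Set.Icc 0 1 := fun q hq =>
      ⟨le_trans zero_le_one hq.1.1, hq.2⟩
    have hFcont : ContinuousOn (fun q : ℝ × ℝ => |U q.1 q.2| - m q.1) K :=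
      ((hU_cont.mono hKsub).abs).sub ((hmcont.comp continuous_fst).continuousOn)
    set E := K ∩ (fun q : ℝ × ℝ => |U q.1 q.2| - m q.1) ⁻¹' Set.Ici 0 with hE
    have hEclosed : IsClosed E :=
      hFcont.preimage_isClosed_of_isClosed (isClosed_Icc.prod isClosed_Icc) isClosed_Ici
    have hEcompact : IsCompact E :=
      (isCompact_Icc.prod isCompact_Icc).of_isClosed_subset hEclosed
        Set.inter_subset_left
    have hEne : E.Nonempty := by
      refine ⟨(t₁, x₀), ⟨⟨⟨ht₁, le_refl _⟩, hx₀⟩, ?_⟩⟩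
      simp only [Set.mem_preimage, Set.mem_Ici, sub_nonneg]
      exact hcon.le
    obtain ⟨⟨t', x'⟩, hmem, hminOn⟩ :=
      hEcompact.exists_isMinOn hEne continuous_fst.continuousOn
    have hmin : ∀ q ∈ E, t' ≤ q.1 := fun q hq => hminOn hq
    have ht'I : t' ∈ Set.Icc 1 t₁ := hmem.1.1
    have hx'I : x' ∈ Set.Icc (0:ℝ) 1 := hmem.1.2
    have htouch0 : m t' ≤ |U t' x'| := by
      have := hmem.2
      simp only [Set.mem_preimage, Set.mem_Ici, sub_nonneg] at this
      exact this
    have hm1 : A < m 1 := by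
      have : m 1 = A + (M₀ / κ + δ) := by simp [hmdef]
      rw [this]
      have := add_pos (div_pos hM₀ hκ) hδ
      linarith
    have ht'ne1 : t' ≠ 1 := by
      intro h
      rw [h] at htouch0
      have := hA1 x' hx'I
      linarith
    have ht'gt : 1 < t' := lt_of_le_of_ne ht'I.1 (Ne.symm ht'ne1)
    have ht'pos : 0 < t' := lt_trans one_pos ht'gt
    have hstrict : ∀ t ∈ Set.Ico (1:ℝ) t', ∀ y ∈ Set.Icc (0:ℝ) 1, |U t y| < m t := by
      intro t ht y hy
      by_contra hc
      push_neg at hc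
      have hmemE : (t, y) ∈ E := by
        refine ⟨⟨⟨ht.1, le_trans ht.2.le ht'I.2⟩, hy⟩, ?_⟩
        simp only [Set.mem_preimage, Set.mem_Ici, sub_nonneg]
        exact hc
      exact absurd (hmin _ hmemE) (not_le.mpr ht.2)
    have hle : ∀ y ∈ Set.Icc (0:ℝ) 1, |U t' y| ≤ m t' := by
      intro y hy
      have hcs : ContinuousOn (fun t => U t y) (Set.Icc 1 t') := by
        have : ContinuousOn ((fun q : ℝ × ℝ => U q.1 q.2) ∘ (fun t : ℝ => (t, y)))
            (Set.Icc 1 t') := by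
          apply hU_cont.comp (Continuous.continuousOn (continuous_id.prodMk continuous_const))
          intro t ht
          exact ⟨le_trans zero_le_one ht.1, hy⟩
        exact this
      have hcw : ContinuousWithinAt (fun t => m t - |U t y|) (Set.Ico 1 t') t' := by
        apply ContinuousWithinAt.sub
        · exact hmcont.continuousAt.continuousWithinAt
        · exact ((hcs t' (Set.right_mem_Icc.mpr ht'gt.le)).mono
            Set.Ico_subset_Icc_self).abs
      haveI : (𝓝[Set.Ico (1:ℝ) t'] t').NeBot := by
        apply mem_closure_iff_nhdsWithin_neBot.mp
        rw [closure_Ico (ne_of_lt ht'gt)]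
        exact Set.right_mem_Icc.mpr ht'gt.le
      have h0le : 0 ≤ m t' - |U t' y| := by
        apply ge_of_tendsto hcw
        filter_upwards [self_mem_nhdsWithin] with t ht
        have := hstrict t ht y hy
        linarith
      linarith
    have htouchEq : |U t' x'| = m t' := le_antisymm (hle x' hx'I) htouch0
    -- nonlocal term bound
    have hIb : |∫ y in (0:ℝ)..1, ν y * U t' y| ≤ normν * m t' := by
      have hb : ∀ y ∈ Set.uIoc (0:ℝ) 1, ‖ν y * U t' y‖ ≤ normν * m t' := by
        intro y hy
        rw [Set.uIoc_of_le zero_le_one] at hy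
        rw [Real.norm_eq_abs, abs_mul]
        exact mul_le_mul (hνb y) (hle y ⟨hy.1.le, hy.2⟩) (abs_nonneg _) hν0
      have := intervalIntegral.norm_integral_le_of_norm_le_const hb
      simpa using this
    have habsI : |ε * c t' x' * ∫ y in (0:ℝ)..1, ν y * U t' y|
        ≤ ε * normc * normν * m t' := by
      rw [abs_mul, abs_mul, abs_of_nonneg hε, mul_assoc (ε * normc)]
      exact mul_le_mul (mul_le_mul le_rfl (hcb t' x') (abs_nonneg _) hε) hIb
        (abs_nonneg _) (mul_nonneg hε hc0)
    have hNL1 : ε * c t' x' * (∫ y in (0:ℝ)..1, ν y * U t' y)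
        ≤ ε * normc * normν * m t' := le_trans (le_abs_self _) habsI
    have hNL2 : -(ε * c t' x' * ∫ y in (0:ℝ)..1, ν y * U t' y)
        ≤ ε * normc * normν * m t' := le_trans (neg_le_abs _) habsI
    have hη : |(0:ℝ)| ≤ η₀ := by simpa using hη₀.le
    rcases (abs_eq (hmpos t').le).mp htouchEq with hcase | hcase
    · -- U t' x' = m t'
      apply no_touch (fun y => U t' y) (fun y => Ux t' y) (Uxx t' x') (Ut t' x')
        (fun s => U s x') m κ M₀ δ A t' x' hκ hδ hA hM₀ hmdef ht'gt hx'I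
        (fun y hy => hUx t' ht'pos y hy) (hUxx t' ht'pos x' hx'I)
        ⟨(hbc t' ht'pos).1, (hbc t' ht'pos).2⟩
        (fun y hy => by
          show U t' y ≤ U t' x'
          rw [hcase]; exact le_trans (le_abs_self _) (hle y hy))
        hcase (hUt t' ht'pos x' hx'I)
        (fun t ht => le_trans (le_abs_self _) (hstrict t ht x' hx'I).le)
        hcase
      intro hux0
      rw [heq t' ht'pos x' hx'I]
      have hf : f t' x' (U t' x') (Ux t' x') ≤ -ξ * m t' + M₀ := by
        rw [hcase, hux0]
        exact hdiss₁ t' x' hx'I (m t') 0 (hmpos t').le hη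
      have hexp : κ * m t' = ξ * m t' - ε * normc * normν * m t' := by
        rw [hκdef]; ring
      linarith [hNL1, hf, hexp]
    · -- U t' x' = -(m t')
      apply no_touch (fun y => -U t' y) (fun y => -Ux t' y) (-(Uxx t' x')) (-(Ut t' x'))
        (fun s => -U s x') m κ M₀ δ A t' x' hκ hδ hA hM₀ hmdef ht'gt hx'I
        (fun y hy => (hUx t' ht'pos y hy).neg) ((hUxx t' ht'pos x' hx'I).neg)
        ⟨by show -Ux t' 0 = 0; rw [(hbc t' ht'pos).1, neg_zero],
         by show -Ux t' 1 = 0; rw [(hbc t' ht'pos).2, neg_zero]⟩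
        (fun y hy => by
          show -U t' y ≤ -U t' x'
          have h1 := abs_le.mp (hle y hy)
          have h2 : -U t' x' = m t' := by rw [hcase]; ring
          linarith [h1.1])
        (by show -U t' x' = m t'; rw [hcase]; ring) ((hUt t' ht'pos x' hx'I).neg)
        (fun t ht => by
          show -U t x' ≤ m t
          have h1 := abs_le.mp (hstrict t ht x' hx'I).le
          linarith [h1.1])
        (by show -U t' x' = m t'; rw [hcase]; ring)
      intro hux0
      rw [neg_eq_zero] at hux0
      have hEq := heq t' ht'pos x' hx'I
      have hf : -ξ * (-(m t')) - M₀ ≤ f t' x' (U t' x') (Ux t' x') := by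
        rw [hcase, hux0]
        exact hdiss₂ t' x' hx'I (-(m t')) 0 (neg_nonpos.mpr (hmpos t').le) hη
      have hexp : κ * m t' = ξ * m t' - ε * normc * normν * m t' := by
        rw [hκdef]; ring
      show -Ut t' x' ≤ -Uxx t' x' - κ * m t' + M₀
      rw [hEq]
      linarith [hNL2, hf, hexp]
  -- conclude limsup bound
  have hS0 : ∀ t, 0 ≤ sSup ((fun x => |U t x|) '' Set.Icc (0:ℝ) 1) := fun t =>
    Real.sSup_nonneg (by rintro v ⟨x, hx, rfl⟩; exact abs_nonneg _)
  apply le_of_forall_pos_le_add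
  intro δ hδ
  apply Filter.limsup_le_of_le
  · exact Filter.IsBoundedUnder.isCoboundedUnder_le ⟨0, Filter.eventually_map.mpr
      (Filter.Eventually.of_forall (fun t => hS0 t))⟩
  · -- eventually sSup ≤ Mstar + δ
    have hdecay : Tendsto (fun t : ℝ => A * Real.exp (-κ * (t - 1))) atTop (𝓝 0) := by
      have h0 : Tendsto (fun t : ℝ => t - 1) atTop atTop := by
        simpa [sub_eq_add_neg] using tendsto_atTop_add_const_right atTop (-1)
          (tendsto_id : Tendsto (fun t : ℝ => t) atTop atTop)
      have h1 : Tendsto (fun t : ℝ => -κ * (t - 1)) atTop atBot :=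
        (Filter.tendsto_const_mul_atBot_of_neg (by linarith : -κ < 0)).mpr h0
      have h2 := (Real.tendsto_exp_atBot.comp h1).const_mul A
      simpa using h2
    filter_upwards [eventually_ge_atTop (1:ℝ),
      hdecay.eventually (eventually_le_nhds (half_pos hδ))] with t ht1 ht2
    apply Real.sSup_le
    · rintro v ⟨x, hx, rfl⟩
      have := main (δ/2) (half_pos hδ) t ht1 x hx
      rw [hMs]
      linarith
    · linarith [hMspos]
end

section
/- Let f : ℝ × [0,1] × ℝ × ℝ → ℝ be continuous and continuously differentiable in its last two arguments, and suppose there are constants ξ, M₁, ε₁ > 0 such that f(t,x,u,p) ≤ −ξu² + M₁ whenever u ≥ 0 and |p| ≤ ε₁, and f(t,x,u,p) ≥ ξu² − M₁ whenever u ≤ 0 and |p| ≤ ε₁. Set C = (3e² − e)/(2(e − 1)), let ε ∈ ℝ with |ε| < ξ/(C + 1), and set M₁* = √(M₁/(ξ − (C+1)|ε|)). Let U be a classical solution on (0,∞) × [0,1] of U_t = U_xx − ε U_x V_x − ε U V + ε U² + f(t,x,U,U_x) with U_x(t,0) = U_x(t,1) = 0 for t > 0, where for each t the function V(t,·) is given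 by V(t,x) = c(t)(eˣ + e^{−x}) + ∫₀ˣ (e^{y−x} − e^{x−y})/2 · U(t,y) dy with c(t) = ∫₀¹ (e^{2−y} + e^{y})/(2(e² − 1)) · U(t,y) dy. Then limsup_{t→∞} max_{x∈[0,1]} |U(t,x)| ≤ M₁*. -/
open Set Filter

lemma spatial_max (g g' g'' : ℝ → ℝ)
    (hg' : ∀ x ∈ Icc (0:ℝ) 1, HasDerivWithinAt g (g' x) (Icc 0 1) x)
    (hg'' : ∀ x ∈ Icc (0:ℝ) 1, HasDerivWithinAt g' (g'' x) (Icc 0 1) x)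
    (hb0 : g' 0 = 0) (hb1 : g' 1 = 0)
    (x₀ : ℝ) (hx₀ : x₀ ∈ Icc (0:ℝ) 1) (hmax : IsMaxOn g (Icc 0 1) x₀) :
    g' x₀ = 0 ∧ g'' x₀ ≤ 0 := by
  have h0le := hx₀.1
  have hle1 := hx₀.2
  have hder0 : g' x₀ = 0 := by
    rcases eq_or_lt_of_le h0le with h | h
    · rw [← h]; exact hb0
    rcases eq_or_lt_of_le hle1 with h' | h'
    · rw [h']; exact hb1
    · have hmem : Icc (0:ℝ) 1 ∈ nhds x₀ := Icc_mem_nhds h h'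
      exact (hmax.isLocalMax hmem).hasDerivAt_eq_zero ((hg' x₀ hx₀).hasDerivAt hmem)
  refine ⟨hder0, ?_⟩
  by_contra hcon
  push_neg at hcon
  -- slope of g' near x₀ is positive
  have hs : Tendsto (slope g' x₀) (nhdsWithin x₀ (Icc (0:ℝ) 1 \ {x₀})) (nhds (g'' x₀)) :=
    hasDerivWithinAt_iff_tendsto_slope.mp (hg'' x₀ hx₀)
  have hev : ∀ᶠ y in nhdsWithin x₀ (Icc (0:ℝ) 1 \ {x₀}), 0 < slope g' x₀ y :=
    hs.eventually (eventually_gt_nhds hcon)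
  rw [eventually_nhdsWithin_iff, Metric.eventually_nhds_iff] at hev
  obtain ⟨d, hd, hball⟩ := hev
  have hslope : ∀ y ∈ Icc (0:ℝ) 1, y ≠ x₀ → |y - x₀| < d → 0 < (g' y - g' x₀) / (y - x₀) := by
    intro y hy hne hcl
    have := hball (by rwa [Real.dist_eq]) ⟨hy, hne⟩
    rwa [slope_def_field] at this
  rcases eq_or_lt_of_le hle1 with heq1 | hlt1
  · -- x₀ = 1 : use left side
    subst heq1
    set y₁ := max 0 (1 - d / 2) with hy₁def
    have hy₁lt : y₁ < 1 := by
      apply max_lt one_pos; linarith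
    have hy₁0 : 0 ≤ y₁ := le_max_left _ _
    have hneg : ∀ y ∈ interior (Icc y₁ 1), deriv g y < 0 := by
      intro y hy
      rw [interior_Icc] at hy
      obtain ⟨hya, hyb⟩ := hy
      have hy0 : 0 < y := lt_of_le_of_lt hy₁0 hya
      have hyI : y ∈ Icc (0:ℝ) 1 := ⟨le_of_lt hy0, le_of_lt hyb⟩
      have hda : HasDerivAt g (g' y) y := (hg' y hyI).hasDerivAt (Icc_mem_nhds hy0 hyb)
      rw [hda.deriv]
      have hcl : |y - 1| < d := by
        rw [abs_of_nonpos (by linarith)]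
        have : 1 - d / 2 ≤ y₁ := le_max_right _ _
        linarith
      have hpos := hslope y hyI (ne_of_lt hyb) hcl
      rw [hder0, sub_zero] at hpos
      rcases (div_pos_iff).mp hpos with ⟨hn, hdp⟩ | ⟨hn, hdp⟩
      · linarith
      · exact hn
    have hcont : ContinuousOn g (Icc y₁ 1) := by
      intro y hy
      exact ((hg' y ⟨le_trans hy₁0 hy.1, hy.2⟩).continuousWithinAt).mono
        (fun z hz => ⟨le_trans hy₁0 hz.1, hz.2⟩)
    have hanti := strictAntiOn_of_deriv_neg (convex_Icc y₁ 1) hcont hneg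
    have := hanti (left_mem_Icc.mpr (le_of_lt hy₁lt)) (right_mem_Icc.mpr (le_of_lt hy₁lt)) hy₁lt
    exact absurd (hmax ⟨hy₁0, le_of_lt hy₁lt⟩) (not_le.mpr this)
  · -- x₀ < 1 : use right side
    set y₁ := min 1 (x₀ + d / 2) with hy₁def
    have hy₁gt : x₀ < y₁ := lt_min hlt1 (by linarith)
    have hy₁1 : y₁ ≤ 1 := min_le_left _ _
    have hpos : ∀ y ∈ interior (Icc x₀ y₁), 0 < deriv g y := by
      intro y hy
      rw [interior_Icc] at hy
      obtain ⟨hya, hyb⟩ := hy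
      have hy0 : 0 < y := lt_of_le_of_lt h0le hya
      have hy1 : y < 1 := lt_of_lt_of_le hyb hy₁1
      have hyI : y ∈ Icc (0:ℝ) 1 := ⟨le_of_lt hy0, le_of_lt hy1⟩
      have hda : HasDerivAt g (g' y) y := (hg' y hyI).hasDerivAt (Icc_mem_nhds hy0 hy1)
      rw [hda.deriv]
      have hcl : |y - x₀| < d := by
        rw [abs_of_nonneg (by linarith)]
        have : y₁ ≤ x₀ + d / 2 := min_le_right _ _
        linarith
      have hp := hslope y hyI (ne_of_gt hya) hcl
      rw [hder0, sub_zero] at hp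
      rcases (div_pos_iff).mp hp with ⟨hn, hdp⟩ | ⟨hn, hdp⟩
      · exact hn
      · linarith
    have hcont : ContinuousOn g (Icc x₀ y₁) := by
      intro y hy
      exact ((hg' y ⟨le_trans h0le hy.1, le_trans hy.2 hy₁1⟩).continuousWithinAt).mono
        (fun z hz => ⟨le_trans h0le hz.1, le_trans hz.2 hy₁1⟩)
    have hmono := strictMonoOn_of_deriv_pos (convex_Icc x₀ y₁) hcont hpos
    have := hmono (left_mem_Icc.mpr (le_of_lt hy₁gt)) (right_mem_Icc.mpr (le_of_lt hy₁gt)) hy₁gt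
    exact absurd (hmax ⟨le_trans h0le (le_of_lt hy₁gt), hy₁1⟩) (not_le.mpr this)

lemma vbound (u : ℝ → ℝ) (m : ℝ)
    (hm : ∀ y ∈ Icc (0:ℝ) 1, |u y| ≤ m)
    (x : ℝ) (hx : x ∈ Icc (0:ℝ) 1) :
    |(∫ y in (0:ℝ)..1, (Real.exp (2 - y) + Real.exp y) / (2 * (Real.exp 2 - 1)) * u y) *
        (Real.exp x + Real.exp (-x)) +
      ∫ y in (0:ℝ)..x, (Real.exp (y - x) - Real.exp (x - y)) / 2 * u y|
      ≤ (Real.exp 2 / (Real.exp 1 - 1)) * m := by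
  have hm0 : 0 ≤ m := le_trans (abs_nonneg _) (hm 0 (by norm_num))
  have hE : (2:ℝ) < Real.exp 1 := by
    have := Real.add_one_lt_exp (x := 1) one_ne_zero
    linarith
  have hE2 : Real.exp 2 = Real.exp 1 * Real.exp 1 := by
    rw [show (2:ℝ) = 1 + 1 by norm_num, Real.exp_add]
  have hE2gt : (1:ℝ) < Real.exp 2 := by nlinarith
  -- bound on first integral
  have h1 : |∫ y in (0:ℝ)..1, (Real.exp (2 - y) + Real.exp y) / (2 * (Real.exp 2 - 1)) * u y|
      ≤ (Real.exp 2 + Real.exp 1) / (2 * (Real.exp 2 - 1)) * m := by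
    have := intervalIntegral.norm_integral_le_of_norm_le_const
      (a := (0:ℝ)) (b := 1) (C := (Real.exp 2 + Real.exp 1) / (2 * (Real.exp 2 - 1)) * m)
      (f := fun y => (Real.exp (2 - y) + Real.exp y) / (2 * (Real.exp 2 - 1)) * u y) ?_
    · simpa using this
    · intro y hy
      rw [Set.uIoc_of_le (by norm_num : (0:ℝ) ≤ 1)] at hy
      have hy0 : 0 < y := hy.1
      have hy1 : y ≤ 1 := hy.2
      rw [Real.norm_eq_abs, abs_mul]
      have hnum : Real.exp (2 - y) + Real.exp y ≤ Real.exp 2 + Real.exp 1 :=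
        add_le_add (Real.exp_le_exp.mpr (by linarith)) (Real.exp_le_exp.mpr hy1)
      have hden : (0:ℝ) < 2 * (Real.exp 2 - 1) := by nlinarith
      have hcoef : |(Real.exp (2 - y) + Real.exp y) / (2 * (Real.exp 2 - 1))|
          ≤ (Real.exp 2 + Real.exp 1) / (2 * (Real.exp 2 - 1)) := by
        rw [abs_div, abs_of_pos (by positivity : (0:ℝ) < Real.exp (2 - y) + Real.exp y),
          abs_of_pos hden]
        gcongr
      exact mul_le_mul hcoef (hm y ⟨le_of_lt hy0, hy1⟩) (abs_nonneg _)
        (by positivity)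
  -- bound on second integral
  have h2 : |∫ y in (0:ℝ)..x, (Real.exp (y - x) - Real.exp (x - y)) / 2 * u y|
      ≤ Real.exp 1 / 2 * m := by
    have hx0 := hx.1
    have hx1 := hx.2
    have := intervalIntegral.norm_integral_le_of_norm_le_const
      (a := (0:ℝ)) (b := x) (C := Real.exp 1 / 2 * m)
      (f := fun y => (Real.exp (y - x) - Real.exp (x - y)) / 2 * u y) ?_
    · rw [Real.norm_eq_abs] at this
      calc |∫ y in (0:ℝ)..x, (Real.exp (y - x) - Real.exp (x - y)) / 2 * u y|
          ≤ Real.exp 1 / 2 * m * |x - 0| := this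
        _ ≤ Real.exp 1 / 2 * m := by
            rw [sub_zero, abs_of_nonneg hx0]
            have hEm : 0 ≤ Real.exp 1 / 2 * m := by positivity
            nlinarith
    · intro y hy
      rw [Set.uIoc_of_le hx0] at hy
      have hy0 : 0 < y := hy.1
      have hyx : y ≤ x := hy.2
      rw [Real.norm_eq_abs, abs_mul]
      have ha : Real.exp (y - x) ≤ Real.exp 1 := Real.exp_le_exp.mpr (by linarith)
      have hb : Real.exp (x - y) ≤ Real.exp 1 := Real.exp_le_exp.mpr (by linarith)
      have hcoef : |(Real.exp (y - x) - Real.exp (x - y)) / 2| ≤ Real.exp 1 / 2 := by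
        rw [abs_div, abs_two]
        have habs : |Real.exp (y - x) - Real.exp (x - y)| ≤ Real.exp 1 :=
          abs_sub_le_iff.mpr ⟨by linarith [Real.exp_pos (x - y)],
            by linarith [Real.exp_pos (y - x)]⟩
        gcongr
      exact mul_le_mul hcoef (hm y ⟨le_of_lt hy0, le_trans hyx hx1⟩) (abs_nonneg _)
        (by positivity)
  -- combine
  have hcx : Real.exp x + Real.exp (-x) ≤ Real.exp 1 + 1 :=
    add_le_add (Real.exp_le_exp.mpr hx.2) (Real.exp_le_one_iff.mpr (by linarith [hx.1]))
  have hcx0 : 0 < Real.exp x + Real.exp (-x) := by positivity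
  calc |(∫ y in (0:ℝ)..1, (Real.exp (2 - y) + Real.exp y) / (2 * (Real.exp 2 - 1)) * u y) *
        (Real.exp x + Real.exp (-x)) +
      ∫ y in (0:ℝ)..x, (Real.exp (y - x) - Real.exp (x - y)) / 2 * u y|
      ≤ |(∫ y in (0:ℝ)..1, (Real.exp (2 - y) + Real.exp y) / (2 * (Real.exp 2 - 1)) * u y)| *
        (Real.exp x + Real.exp (-x)) +
        |∫ y in (0:ℝ)..x, (Real.exp (y - x) - Real.exp (x - y)) / 2 * u y| := by
        refine le_trans (abs_add_le _ _) ?_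
        rw [abs_mul, abs_of_pos hcx0]
    _ ≤ (Real.exp 2 + Real.exp 1) / (2 * (Real.exp 2 - 1)) * m * (Real.exp 1 + 1) +
        Real.exp 1 / 2 * m := by
        refine add_le_add (mul_le_mul h1 hcx (le_of_lt hcx0) ?_) h2
        exact mul_nonneg (div_nonneg (by positivity) (by nlinarith)) hm0
    _ ≤ (Real.exp 2 / (Real.exp 1 - 1)) * m := by
        set E := Real.exp 1 with hEdef
        rw [hE2]
        rw [hE2] at hE2gt
        have h3 : 2 * (E * E - 1) ≠ 0 := ne_of_gt (by nlinarith)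
        have h4 : E - 1 ≠ 0 := ne_of_gt (by linarith)
        have h5 : E + 1 ≠ 0 := ne_of_gt (by linarith)
        have h6 : E * E - 1 ≠ 0 := ne_of_gt (by nlinarith)
        have key : (E * E + E) / (2 * (E * E - 1)) * m * (E + 1) + E / 2 * m
            = E * E / (E - 1) * m := by
          have h24 : 2 * (E - 1) ≠ 0 := mul_ne_zero two_ne_zero h4
          have hA : (E * E + E) / (2 * (E * E - 1)) = E / (2 * (E - 1)) := by
            rw [div_eq_div_iff h3 h24]; ring
          rw [hA]
          simp only [div_mul_eq_mul_div]
          rw [div_add_div _ _ h24 two_ne_zero, div_eq_div_iff (mul_ne_zero h24 two_ne_zero) h4]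
          ring
        exact le_of_eq key

/-- Ultimate sup-norm bound for classical solutions of the parabolic–elliptic
chemotaxis system `U_t = U_xx − ε U_x V_x − ε U V + ε U² + f(t,x,U,U_x)`,
`V_xx − V + U = 0`, with Neumann boundary conditions. -/
theorem stmt12
    (f : ℝ → ℝ → ℝ → ℝ → ℝ)
    (hf_cont : Continuous fun q : ℝ × ℝ × ℝ × ℝ => f q.1 q.2.1 q.2.2.1 q.2.2.2)
    (hf_smooth : ∀ t x, ContDiff ℝ 1 fun q : ℝ × ℝ => f t x q.1 q.2)
    (ξ M₁ ε₁ : ℝ) (hξ : 0 < ξ) (hM₁ : 0 < M₁) (hε₁ : 0 < ε₁)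
    (hdiss₁ : ∀ t : ℝ, ∀ x ∈ Set.Icc (0:ℝ) 1, ∀ w p : ℝ,
      0 ≤ w → |p| ≤ ε₁ → f t x w p ≤ -ξ * w ^ 2 + M₁)
    (hdiss₂ : ∀ t : ℝ, ∀ x ∈ Set.Icc (0:ℝ) 1, ∀ w p : ℝ,
      w ≤ 0 → |p| ≤ ε₁ → ξ * w ^ 2 - M₁ ≤ f t x w p)
    (C : ℝ) (hC : C = (3 * Real.exp 2 - Real.exp 1) / (2 * (Real.exp 1 - 1)))
    (ε : ℝ) (hε : |ε| < ξ / (C + 1))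
    (Mstar : ℝ) (hMstar : Mstar = Real.sqrt (M₁ / (ξ - (C + 1) * |ε|)))
    (U Ut Ux Uxx V Vx : ℝ → ℝ → ℝ)
    (hU_cont : ContinuousOn (fun q : ℝ × ℝ => U q.1 q.2) (Set.Ici 0 ×ˢ Set.Icc 0 1))
    (hUt : ∀ t > (0:ℝ), ∀ x ∈ Set.Icc (0:ℝ) 1, HasDerivAt (fun s => U s x) (Ut t x) t)
    (hUx : ∀ t > (0:ℝ), ∀ x ∈ Set.Icc (0:ℝ) 1,
      HasDerivWithinAt (fun y => U t y) (Ux t x) (Set.Icc 0 1) x)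
    (hUxx : ∀ t > (0:ℝ), ∀ x ∈ Set.Icc (0:ℝ) 1,
      HasDerivWithinAt (fun y => Ux t y) (Uxx t x) (Set.Icc 0 1) x)
    (hderiv_cont : ContinuousOn
      (fun q : ℝ × ℝ => (Ut q.1 q.2, Ux q.1 q.2, Uxx q.1 q.2)) (Set.Ioi 0 ×ˢ Set.Icc 0 1))
    (hV : ∀ t x, V t x =
      (∫ y in (0:ℝ)..1, (Real.exp (2 - y) + Real.exp y) / (2 * (Real.exp 2 - 1)) * U t y) *
        (Real.exp x + Real.exp (-x)) +
      ∫ y in (0:ℝ)..x, (Real.exp (y - x) - Real.exp (x - y)) / 2 * U t y)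
    (hVx : ∀ t > (0:ℝ), ∀ x ∈ Set.Icc (0:ℝ) 1,
      HasDerivWithinAt (fun y => V t y) (Vx t x) (Set.Icc 0 1) x)
    (heq : ∀ t > (0:ℝ), ∀ x ∈ Set.Icc (0:ℝ) 1,
      Ut t x = Uxx t x - ε * Ux t x * Vx t x - ε * U t x * V t x + ε * (U t x) ^ 2 +
        f t x (U t x) (Ux t x))
    (hbc : ∀ t > (0:ℝ), Ux t 0 = 0 ∧ Ux t 1 = 0) :
    Filter.limsup (fun t => sSup ((fun x => |U t x|) '' Set.Icc (0:ℝ) 1)) Filter.atTop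
      ≤ Mstar := by
  have hE : (2:ℝ) < Real.exp 1 := by
    have := Real.add_one_lt_exp (x := 1) one_ne_zero
    linarith
  have hE2 : Real.exp 2 = Real.exp 1 * Real.exp 1 := by
    rw [show (2:ℝ) = 1 + 1 by norm_num, Real.exp_add]
  have hCpos : 0 < C := by
    rw [hC]; apply div_pos; nlinarith; nlinarith
  have hCV : Real.exp 2 / (Real.exp 1 - 1) ≤ C := by
    rw [hC, hE2]
    rw [div_le_div_iff₀ (by linarith) (by linarith)]
    nlinarith
  have hC1 : 0 < C + 1 := by linarith
  have hδpos : 0 < ξ - (C + 1) * |ε| := by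
    have h := (lt_div_iff₀ hC1).mp hε
    linarith
  set δ := ξ - (C + 1) * |ε| with hδdef
  clear_value δ
  have hUcx : ∀ t, 0 < t → ContinuousOn (fun x => U t x) (Icc (0:ℝ) 1) :=
    fun t ht x hx => (hUx t ht x hx).continuousWithinAt
  have hVC : ∀ t, 0 < t → ∀ m, (∀ y ∈ Icc (0:ℝ) 1, |U t y| ≤ m) →
      ∀ x ∈ Icc (0:ℝ) 1, |V t x| ≤ C * m := by
    intro t ht m hm x hx
    rw [hV t x]
    refine le_trans (vbound (fun y => U t y) m hm x hx) ?_
    have hm0 : 0 ≤ m := le_trans (abs_nonneg _) (hm 0 ⟨le_refl _, by norm_num⟩)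
    exact mul_le_mul_of_nonneg_right hCV hm0
  -- key pointwise estimate at a spatial max of |U t ·|
  have key : ∀ t, 0 < t → ∀ x₀ ∈ Icc (0:ℝ) 1, (∀ y ∈ Icc (0:ℝ) 1, |U t y| ≤ |U t x₀|) →
      (0 ≤ U t x₀ → Ut t x₀ ≤ -(δ * (U t x₀)^2) + M₁) ∧
      (U t x₀ ≤ 0 → δ * (U t x₀)^2 - M₁ ≤ Ut t x₀) := by
    intro t ht x₀ hx₀ hdom
    have hVb : |V t x₀| ≤ C * |U t x₀| := hVC t ht _ hdom x₀ hx₀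
    have hpde := heq t ht x₀ hx₀
    have hsq : |U t x₀| * |U t x₀| = (U t x₀)^2 := by
      rw [← abs_mul, ← sq, abs_sq]
    constructor
    · intro hpos
      have habs : |U t x₀| = U t x₀ := abs_of_nonneg hpos
      have hmaxU : IsMaxOn (fun y => U t y) (Icc 0 1) x₀ := by
        intro y hy
        have := hdom y hy
        simp only [mem_setOf_eq]
        calc U t y ≤ |U t y| := le_abs_self _
          _ ≤ |U t x₀| := this
          _ = U t x₀ := habs
      obtain ⟨h1, h2⟩ := spatial_max (fun y => U t y) (fun y => Ux t y) (fun y => Uxx t y)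
        (hUx t ht) (hUxx t ht) (hbc t ht).1 (hbc t ht).2 x₀ hx₀ hmaxU
      have hf := hdiss₁ t x₀ hx₀ (U t x₀) 0 hpos (by rw [abs_zero]; linarith)
      have hpde' : Ut t x₀ = Uxx t x₀ - ε * U t x₀ * V t x₀ + ε * (U t x₀)^2
          + f t x₀ (U t x₀) 0 := by
        rw [hpde, h1]; ring
      have hVbb : -(ε * U t x₀ * V t x₀) ≤ C * |ε| * (U t x₀)^2 := by
        calc -(ε * U t x₀ * V t x₀) ≤ |ε * U t x₀ * V t x₀| := neg_le_abs _
          _ = |ε| * |U t x₀| * |V t x₀| := by rw [abs_mul, abs_mul]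
          _ ≤ |ε| * |U t x₀| * (C * |U t x₀|) := by
              apply mul_le_mul_of_nonneg_left hVb (by positivity)
          _ = C * |ε| * (|U t x₀| * |U t x₀|) := by ring
          _ = C * |ε| * (U t x₀)^2 := by rw [hsq]
      have hε2 : ε * (U t x₀)^2 ≤ |ε| * (U t x₀)^2 :=
        mul_le_mul_of_nonneg_right (le_abs_self ε) (sq_nonneg _)
      rw [hδdef]
      linarith
    · intro hneg
      have habs : |U t x₀| = -U t x₀ := abs_of_nonpos hneg
      have hmaxU : IsMaxOn (fun y => -U t y) (Icc 0 1) x₀ := by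
        intro y hy
        have := hdom y hy
        simp only [mem_setOf_eq]
        calc -U t y ≤ |U t y| := neg_le_abs _
          _ ≤ |U t x₀| := this
          _ = -U t x₀ := habs
      obtain ⟨h1, h2⟩ := spatial_max (fun y => -U t y) (fun y => -Ux t y) (fun y => -Uxx t y)
        (fun x hx => (hUx t ht x hx).neg) (fun x hx => (hUxx t ht x hx).neg)
        (by show -Ux t 0 = 0; rw [(hbc t ht).1, neg_zero])
        (by show -Ux t 1 = 0; rw [(hbc t ht).2, neg_zero]) x₀ hx₀ hmaxU
      have h1' : Ux t x₀ = 0 := neg_eq_zero.mp h1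
      have h2' : 0 ≤ Uxx t x₀ := by linarith
      have hf := hdiss₂ t x₀ hx₀ (U t x₀) 0 hneg (by rw [abs_zero]; linarith)
      have hpde' : Ut t x₀ = Uxx t x₀ - ε * U t x₀ * V t x₀ + ε * (U t x₀)^2
          + f t x₀ (U t x₀) 0 := by
        rw [hpde, h1']; ring
      have hVbb : -(C * |ε| * (U t x₀)^2) ≤ -(ε * U t x₀ * V t x₀) := by
        have : ε * U t x₀ * V t x₀ ≤ C * |ε| * (U t x₀)^2 := by
          calc ε * U t x₀ * V t x₀ ≤ |ε * U t x₀ * V t x₀| := le_abs_self _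
            _ = |ε| * |U t x₀| * |V t x₀| := by rw [abs_mul, abs_mul]
            _ ≤ |ε| * |U t x₀| * (C * |U t x₀|) := by
                apply mul_le_mul_of_nonneg_left hVb (by positivity)
            _ = C * |ε| * (|U t x₀| * |U t x₀|) := by ring
            _ = C * |ε| * (U t x₀)^2 := by rw [hsq]
        linarith
      have hε2 : -(|ε| * (U t x₀)^2) ≤ ε * (U t x₀)^2 := by
        have := mul_le_mul_of_nonneg_right (neg_abs_le ε) (sq_nonneg (U t x₀))
        linarith
      rw [hδdef]
      linarith
  -- barrier argument
  have barrier : ∀ t₀, 0 < t₀ → ∀ b A κ', 0 < b → 0 ≤ κ' → M₁ + κ' < δ * b^2 → b ≤ A →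
      (∀ x ∈ Icc (0:ℝ) 1, |U t₀ x| < A) →
      ∀ t, t₀ ≤ t → ∀ x ∈ Icc (0:ℝ) 1, |U t x| < max b (A - κ' * (t - t₀)) := by
    intro t₀ ht₀ b A κ' hb hκ0 hκb hbA h0
    by_contra hcon
    push_neg at hcon
    obtain ⟨t₂, ht₂, x₂, hx₂, hge⟩ := hcon
    set φ : ℝ → ℝ := fun t => max b (A - κ' * (t - t₀)) with hφdef
    have hφcont : Continuous φ :=
      continuous_const.max
        (continuous_const.sub (continuous_const.mul (continuous_id.sub continuous_const)))
    set S : Set ℝ := {t | t₀ ≤ t ∧ ∃ x ∈ Icc (0:ℝ) 1, φ t ≤ |U t x|} with hSdef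
    have hSne : S.Nonempty := ⟨t₂, ht₂, x₂, hx₂, hge⟩
    have hSbd : BddBelow S := ⟨t₀, fun t ht => ht.1⟩
    set t₁ := sInf S with ht₁def
    have ht₁t₀ : t₀ ≤ t₁ := le_csInf hSne (fun t ht => ht.1)
    have ht₁pos : 0 < t₁ := lt_of_lt_of_le ht₀ ht₁t₀
    have hmem : ∃ x ∈ Icc (0:ℝ) 1, φ t₁ ≤ |U t₁ x| := by
      obtain ⟨u, hu, hlim⟩ := mem_closure_iff_seq_limit.mp (csInf_mem_closure hSne hSbd)
      choose xs hxs1 hxs2 using fun n => (hu n).2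
      obtain ⟨x₁, hx₁, σ, hσ, hxlim⟩ :=
        (isCompact_Icc (a := (0:ℝ)) (b := 1)).tendsto_subseq hxs1
      refine ⟨x₁, hx₁, ?_⟩
      have hpair : Tendsto (fun n => (u (σ n), xs (σ n))) atTop
          (nhdsWithin (t₁, x₁) (Ici (0:ℝ) ×ˢ Icc (0:ℝ) 1)) := by
        apply tendsto_nhdsWithin_of_tendsto_nhds_of_eventually_within
        · exact (hlim.comp hσ.tendsto_atTop).prodMk_nhds hxlim
        · refine Eventually.of_forall (fun n => ⟨?_, hxs1 (σ n)⟩)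
          exact le_of_lt (lt_of_lt_of_le ht₀ (hu (σ n)).1)
      have hUlim : Tendsto (fun n => U (u (σ n)) (xs (σ n))) atTop (nhds (U t₁ x₁)) := by
        have hcw := (hU_cont (t₁, x₁) ⟨le_of_lt ht₁pos, hx₁⟩)
        exact hcw.tendsto.comp hpair
      have hφlim : Tendsto (fun n => φ (u (σ n))) atTop (nhds (φ t₁)) :=
        (hφcont.tendsto t₁).comp (hlim.comp hσ.tendsto_atTop)
      exact le_of_tendsto_of_tendsto' hφlim hUlim.abs (fun n => hxs2 (σ n))
    have ht₀lt : t₀ < t₁ := by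
      rcases eq_or_lt_of_le ht₁t₀ with h | h
      · exfalso
        obtain ⟨x, hx, hxge⟩ := hmem
        rw [← h] at hxge
        have hx0 := h0 x hx
        have hφt₀ : φ t₀ = A := by
          rw [hφdef]
          simp only [sub_self, mul_zero, sub_zero]
          exact max_eq_right hbA
        rw [hφt₀] at hxge
        linarith
      · exact h
    obtain ⟨x₀, hx₀, hmax0⟩ := isCompact_Icc.exists_isMaxOn
      (⟨0, by norm_num⟩ : (Icc (0:ℝ) 1).Nonempty) ((hUcx t₁ ht₁pos).abs)
    have hdom : ∀ y ∈ Icc (0:ℝ) 1, |U t₁ y| ≤ |U t₁ x₀| := hmax0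
    have hφ₁ : φ t₁ ≤ |U t₁ x₀| := by
      obtain ⟨x, hx, hxge⟩ := hmem
      exact le_trans hxge (hdom x hx)
    have hbU : b ≤ |U t₁ x₀| := le_trans (le_max_left _ _) hφ₁
    obtain ⟨k1, k2⟩ := key t₁ ht₁pos x₀ hx₀ hdom
    have hbefore : ∀ s, t₀ ≤ s → s < t₁ → ∀ x ∈ Icc (0:ℝ) 1, |U s x| < φ s := by
      intro s hs hst x hx
      by_contra hge'
      push_neg at hge'
      exact absurd (csInf_le hSbd ⟨hs, x, hx, hge'⟩) (not_le.mpr hst)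
    have hφlip : ∀ s, s ≤ t₁ → φ s ≤ φ t₁ + κ' * (t₁ - s) := by
      intro s hs
      apply max_le
      · refine le_trans (le_max_left b (A - κ' * (t₁ - t₀))) ?_
        have hmm := mul_nonneg hκ0 (sub_nonneg.mpr hs)
        linarith only [hmm]
      · have heq2 : A - κ' * (s - t₀) = (A - κ' * (t₁ - t₀)) + κ' * (t₁ - s) := by ring
        rw [heq2]
        exact add_le_add (le_max_right _ _) le_rfl
    have hd := hUt t₁ ht₁pos x₀ hx₀
    have hslope0 : Tendsto (slope (fun s => U s x₀) t₁) (nhdsWithin t₁ (Iio t₁))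
        (nhds (Ut t₁ x₀)) :=
      (hasDerivAt_iff_tendsto_slope.mp hd).mono_left
        (nhdsWithin_mono _ (fun z hz => ne_of_lt hz))
    have hsq₁ : b^2 ≤ (U t₁ x₀)^2 := by
      have h := pow_le_pow_left₀ (le_of_lt hb) hbU 2
      rwa [sq_abs] at h
    rcases lt_trichotomy (U t₁ x₀) 0 with hneg | hzero | hpos
    · have habs : |U t₁ x₀| = -U t₁ x₀ := abs_of_nonpos (le_of_lt hneg)
      have hUt_ge : δ * (U t₁ x₀)^2 - M₁ ≤ Ut t₁ x₀ := k2 (le_of_lt hneg)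
      have hmul : δ * b^2 ≤ δ * (U t₁ x₀)^2 := mul_le_mul_of_nonneg_left hsq₁ (le_of_lt hδpos)
      have hgt : κ' < Ut t₁ x₀ := by linarith only [hUt_ge, hmul, hκb]
      have hev : ∀ᶠ s in nhdsWithin t₁ (Iio t₁), slope (fun s => U s x₀) t₁ s ≤ κ' := by
        filter_upwards [Ioo_mem_nhdsLT ht₀lt]
        intro s hs
        obtain ⟨hs1, hs2⟩ := hs
        have hUs := hbefore s (le_of_lt hs1) hs2 x₀ hx₀
        have h5 : -U s x₀ ≤ |U s x₀| := neg_le_abs _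
        have h6 : φ t₁ ≤ -U t₁ x₀ := by rw [← habs]; exact hφ₁
        have hlips := hφlip s (le_of_lt hs2)
        have hnum : -(κ' * (t₁ - s)) < U s x₀ - U t₁ x₀ := by
          linarith only [hUs, h5, h6, hlips]
        rw [slope_def_field, div_le_iff_of_neg (by linarith only [hs2] : s - t₁ < 0)]
        linarith only [hnum]
      have hle := le_of_tendsto hslope0 hev
      linarith only [hle, hgt]
    · exfalso
      rw [hzero, abs_zero] at hbU
      linarith only [hbU, hb]
    · have habs : |U t₁ x₀| = U t₁ x₀ := abs_of_pos hpos
      have hUt_le : Ut t₁ x₀ ≤ -(δ * (U t₁ x₀)^2) + M₁ := k1 (le_of_lt hpos)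
      have hmul : δ * b^2 ≤ δ * (U t₁ x₀)^2 := mul_le_mul_of_nonneg_left hsq₁ (le_of_lt hδpos)
      have hlt : Ut t₁ x₀ < -κ' := by linarith only [hUt_le, hmul, hκb]
      have hev : ∀ᶠ s in nhdsWithin t₁ (Iio t₁), -κ' ≤ slope (fun s => U s x₀) t₁ s := by
        filter_upwards [Ioo_mem_nhdsLT ht₀lt]
        intro s hs
        obtain ⟨hs1, hs2⟩ := hs
        have hUs := hbefore s (le_of_lt hs1) hs2 x₀ hx₀
        have h5 : U s x₀ ≤ |U s x₀| := le_abs_self _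
        have h6 : φ t₁ ≤ U t₁ x₀ := by rw [← habs]; exact hφ₁
        have hlips := hφlip s (le_of_lt hs2)
        have hnum : U s x₀ - U t₁ x₀ < κ' * (t₁ - s) := by
          linarith only [hUs, h5, h6, hlips]
        rw [slope_def_field, le_div_iff_of_neg (by linarith only [hs2] : s - t₁ < 0)]
        linarith only [hnum]
      have hle := ge_of_tendsto hslope0 hev
      linarith only [hle, hlt]
  -- conclusion
  have hMstar0 : 0 ≤ Mstar := by rw [hMstar]; exact Real.sqrt_nonneg _
  have hev_main : ∀ b, Mstar < b → ∀ᶠ t in atTop,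
      sSup ((fun x => |U t x|) '' Icc (0:ℝ) 1) ≤ b := by
    intro b hb
    have hb0 : 0 < b := lt_of_le_of_lt hMstar0 hb
    have hbsq : M₁ < δ * b^2 := by
      have hsqr : Mstar^2 = M₁ / δ := by
        rw [hMstar]
        exact Real.sq_sqrt (le_of_lt (div_pos hM₁ hδpos))
      have h7 : M₁ / δ < b^2 := by
        rw [← hsqr]
        have := pow_lt_pow_left₀ hb hMstar0 (n := 2) (by norm_num)
        exact this
      calc M₁ = δ * (M₁ / δ) := by field_simp
        _ < δ * b^2 := by exact mul_lt_mul_of_pos_left h7 hδpos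
    obtain ⟨x₀, hx₀, hmax1⟩ := isCompact_Icc.exists_isMaxOn
      (⟨0, by norm_num⟩ : (Icc (0:ℝ) 1).Nonempty) ((hUcx 1 one_pos).abs)
    set A := max b (|U 1 x₀|) + 1 with hA
    clear_value A
    have hbA : b ≤ A := by
      rw [hA]
      have h9 := le_max_left b (|U 1 x₀|)
      linarith only [h9]
    have h0 : ∀ x ∈ Icc (0:ℝ) 1, |U 1 x| < A := by
      intro x hx
      have h8 : |U 1 x| ≤ |U 1 x₀| := hmax1 hx
      have h9 : |U 1 x₀| ≤ max b (|U 1 x₀|) := le_max_right _ _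
      rw [hA]
      linarith only [h8, h9]
    set κ' := (δ * b^2 - M₁) / 2 with hκ'
    clear_value κ'
    have hκ'pos : 0 < κ' := by rw [hκ']; linarith only [hbsq]
    have hbar := barrier 1 one_pos b A κ' hb0 (le_of_lt hκ'pos)
      (by rw [hκ']; linarith only [hbsq]) hbA h0
    set T := 1 + (A - b) / κ' with hT
    clear_value T
    have hT1 : (1:ℝ) ≤ T := by
      rw [hT]
      have := div_nonneg (by linarith only [hbA] : (0:ℝ) ≤ A - b) (le_of_lt hκ'pos)
      linarith only [this]
    filter_upwards [eventually_ge_atTop T]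
    intro t ht
    have ht1 : (1:ℝ) ≤ t := le_trans hT1 ht
    have hmax_eq : A - κ' * (t - 1) ≤ b := by
      have h10 : (A - b) / κ' ≤ t - 1 := by rw [hT] at ht; linarith only [ht]
      have h11 := (div_le_iff₀ hκ'pos).mp h10
      nlinarith [h11]
    apply Real.sSup_le ?_ (le_of_lt hb0)
    rintro y ⟨x, hx, rfl⟩
    have h12 := hbar t ht1 x hx
    rw [max_eq_left hmax_eq] at h12
    exact le_of_lt h12
  apply le_of_forall_gt_imp_ge_of_dense
  intro c hc
  refine Filter.limsup_le_of_le ?_ (hev_main c hc)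
  apply Filter.IsCoboundedUnder.of_frequently_ge (a := 0)
  apply Filter.Frequently.of_forall
  intro t
  exact Real.sSup_nonneg (fun y hy => by
    obtain ⟨x, hx, rfl⟩ := hy
    exact abs_nonneg _)
end

section
/- Let n ≥ 2 and let f₁, …, f_n be continuous real-valued functions (f₁ and f_n of (t, a, b) ∈ ℝ × ℝ × ℝ, and f_i for 2 ≤ i ≤ n−1 of (t, a, b, c) ∈ ℝ × ℝ³, where b denotes the i-th coordinate and a, c its neighbors). Assume there exist δ, C > 0 such that for all t ∈ ℝ: f_i ≤ −δ whenever its middle argument b satisfies b ≥ C and each neighbor argument has absolute value at most b, and f_i ≥ δ whenever b ≤ −C and each neighbor argument has absolute value at most −b. Let g₁, …, g_n : ℝ × ℝⁿ → ℝ be continuous with |g_i(t,x)| ≤ M_g for all (t,x), and let ε ∈ ℝ with |ε| < δ/M_g. Suppose x : [0,∞) → ℝⁿ is differentiable and satisfies ẋ₁(t) = f₁(t, x₁(t), x₂(t)) + ε g₁(t, x(t)), ẋ_i(t) = f_i(t, x_{i−1}(t), x_i(t), x_{i+1}(t)) + ε g_i(t, x(t)) for 2 ≤ i ≤ n−1,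 and ẋ_n(t) = f_n(t, x_{n−1}(t), x_n(t)) + ε g_n(t, x(t)) for all t ≥ 0. Then: (i) there exists T ≥ 0 such that |x_i(t)| ≤ C for all t ≥ T and all 1 ≤ i ≤ n; and (ii) if max_i |x_i(t₀)| ≤ C for some t₀ ≥ 0, then max_i |x_i(t)| ≤ C for all t ≥ t₀. -/
open Set Filter Topology

/-- Dissipativity of the perturbed competitive–cooperative tridiagonal system:
every solution eventually enters and remains in the box `{x : |x_i| ≤ C}`,
and the box is positively invariant. Indices are 0-based: `f1` governs the
first coordinate, `fn` the last, and `fm i` the interior coordinates. -/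
theorem stmt13 (n : ℕ) (hn : 2 ≤ n)
    (f1 fn : ℝ → ℝ → ℝ → ℝ) (fm : ℕ → ℝ → ℝ → ℝ → ℝ → ℝ)
    (hf1_cont : Continuous fun q : ℝ × ℝ × ℝ => f1 q.1 q.2.1 q.2.2)
    (hfn_cont : Continuous fun q : ℝ × ℝ × ℝ => fn q.1 q.2.1 q.2.2)
    (hfm_cont : ∀ i, Continuous fun q : ℝ × ℝ × ℝ × ℝ => fm i q.1 q.2.1 q.2.2.1 q.2.2.2)
    (δ C : ℝ) (hδ : 0 < δ) (hC : 0 < C)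
    (hf1 : ∀ t b c : ℝ, (C ≤ b → |c| ≤ b → f1 t b c ≤ -δ) ∧
      (b ≤ -C → |c| ≤ -b → δ ≤ f1 t b c))
    (hfn : ∀ t a b : ℝ, (C ≤ b → |a| ≤ b → fn t a b ≤ -δ) ∧
      (b ≤ -C → |a| ≤ -b → δ ≤ fn t a b))
    (hfm : ∀ i : ℕ, 1 ≤ i → i + 1 < n → ∀ t a b c : ℝ,
      (C ≤ b → |a| ≤ b → |c| ≤ b → fm i t a b c ≤ -δ) ∧
      (b ≤ -C → |a| ≤ -b → |c| ≤ -b → δ ≤ fm i t a b c))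
    (g : Fin n → ℝ → (Fin n → ℝ) → ℝ)
    (hg_cont : ∀ i, Continuous fun q : ℝ × (Fin n → ℝ) => g i q.1 q.2)
    (Mg : ℝ) (hMg : 0 < Mg) (hgb : ∀ i t x, |g i t x| ≤ Mg)
    (ε : ℝ) (hε : |ε| < δ / Mg)
    (x : ℝ → Fin n → ℝ)
    (hx0 : ∀ t ≥ (0:ℝ), HasDerivWithinAt (fun s => x s ⟨0, by omega⟩)
      (f1 t (x t ⟨0, by omega⟩) (x t ⟨1, by omega⟩) + ε * g ⟨0, by omega⟩ t (x t))
      (Set.Ici 0) t)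
    (hxm : ∀ t ≥ (0:ℝ), ∀ i : Fin n, ∀ _h1 : 1 ≤ i.val, ∀ _h2 : i.val + 1 < n,
      HasDerivWithinAt (fun s => x s i)
        (fm i.val t (x t ⟨i.val - 1, by omega⟩) (x t i) (x t ⟨i.val + 1, by omega⟩) +
          ε * g i t (x t)) (Set.Ici 0) t)
    (hxn : ∀ t ≥ (0:ℝ), HasDerivWithinAt (fun s => x s ⟨n - 1, by omega⟩)
      (fn t (x t ⟨n - 2, by omega⟩) (x t ⟨n - 1, by omega⟩) +
        ε * g ⟨n - 1, by omega⟩ t (x t)) (Set.Ici 0) t) :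
    (∃ T ≥ (0:ℝ), ∀ t ≥ T, ∀ i, |x t i| ≤ C) ∧
    (∀ t₀ ≥ (0:ℝ), (∀ i, |x t₀ i| ≤ C) → ∀ t ≥ t₀, ∀ i, |x t i| ≤ C) := by
  classical
  have hne : (Finset.univ : Finset (Fin n)).Nonempty := ⟨⟨0, by omega⟩, Finset.mem_univ _⟩
  set η : ℝ := δ - |ε| * Mg with hηdef
  have hεMg : |ε| * Mg < δ := by
    have h := (lt_div_iff₀ hMg).1 hε
    linarith
  have hη : 0 < η := by rw [hηdef]; linarith
  have hpert : ∀ (i : Fin n) t y, -(|ε| * Mg) ≤ ε * g i t y ∧ ε * g i t y ≤ |ε| * Mg := by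
    intro i t y
    have h1 : |ε * g i t y| ≤ |ε| * Mg := by
      rw [abs_mul]
      exact mul_le_mul_of_nonneg_left (hgb i t y) (abs_nonneg ε)
    exact abs_le.1 h1
  -- key derivative bound
  have key : ∀ t, 0 ≤ t → ∀ i : Fin n, ∃ D : ℝ,
      HasDerivWithinAt (fun s => x s i) D (Set.Ici 0) t ∧
      (C ≤ x t i → (∀ j, |x t j| ≤ x t i) → D ≤ -η) ∧
      (x t i ≤ -C → (∀ j, |x t j| ≤ -(x t i)) → η ≤ D) := by
    have hn0 : 0 < n := by omega
    have hn1 : n - 1 < n := by omega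
    intro t ht i
    rcases eq_or_ne i.val 0 with h0 | h0
    · have hi : i = ⟨0, hn0⟩ := by apply Fin.ext; exact h0
      subst hi
      refine ⟨_, hx0 t ht, ?_, ?_⟩
      · intro hCb hall
        have hf := (hf1 t (x t ⟨0, by omega⟩) (x t ⟨1, by omega⟩)).1 hCb (hall _)
        have hp := (hpert ⟨0, hn0⟩ t (x t)).2
        rw [hηdef]; linarith
      · intro hCb hall
        have hf := (hf1 t (x t ⟨0, by omega⟩) (x t ⟨1, by omega⟩)).2 hCb (hall _)
        have hp := (hpert ⟨0, hn0⟩ t (x t)).1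
        rw [hηdef]; linarith
    · rcases eq_or_ne i.val (n - 1) with h1 | h1
      · have hi : i = ⟨n - 1, hn1⟩ := by apply Fin.ext; exact h1
        subst hi
        refine ⟨_, hxn t ht, ?_, ?_⟩
        · intro hCb hall
          have hf := (hfn t (x t ⟨n - 2, by omega⟩) (x t ⟨n - 1, by omega⟩)).1 hCb (hall _)
          have hp := (hpert ⟨n - 1, hn1⟩ t (x t)).2
          rw [hηdef]; linarith
        · intro hCb hall
          have hf := (hfn t (x t ⟨n - 2, by omega⟩) (x t ⟨n - 1, by omega⟩)).2 hCb (hall _)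
          have hp := (hpert ⟨n - 1, hn1⟩ t (x t)).1
          rw [hηdef]; linarith
      · have hge : 1 ≤ i.val := by omega
        have hlt : i.val + 1 < n := by have := i.isLt; omega
        refine ⟨_, hxm t ht i hge hlt, ?_, ?_⟩
        · intro hCb hall
          have hf := (hfm i.val hge hlt t (x t ⟨i.val - 1, by omega⟩) (x t i)
            (x t ⟨i.val + 1, by omega⟩)).1 hCb (hall _) (hall _)
          have hp := (hpert i t (x t)).2
          rw [hηdef]; linarith
        · intro hCb hall
          have hf := (hfm i.val hge hlt t (x t ⟨i.val - 1, by omega⟩) (x t i)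
            (x t ⟨i.val + 1, by omega⟩)).2 hCb (hall _) (hall _)
          have hp := (hpert i t (x t)).1
          rw [hηdef]; linarith
  choose! d hd hdtop hdbot using key
  -- continuity of solution
  have hxc : ContinuousOn x (Set.Ici 0) := fun t ht =>
    continuousWithinAt_pi.2 fun i => (hd t ht i).continuousWithinAt
  -- sup norm facts
  have hVle : ∀ t (i : Fin n), |x t i| ≤ ‖x t‖ := fun t i => by
    simpa [Real.norm_eq_abs] using norm_le_pi_norm (x t) i
  have hVle' : ∀ t r, 0 ≤ r → (∀ i, |x t i| ≤ r) → ‖x t‖ ≤ r := fun t r hr h =>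
    (pi_norm_le_iff_of_nonneg hr).2 fun i => by simpa [Real.norm_eq_abs] using h i
  have hVmax : ∀ t, ∃ i, |x t i| = ‖x t‖ := by
    intro t
    obtain ⟨i, -, hmax⟩ := Finset.exists_max_image Finset.univ (fun i => |x t i|) hne
    exact ⟨i, le_antisymm (hVle t i)
      (hVle' t _ (abs_nonneg _) fun j => hmax j (Finset.mem_univ j))⟩
  -- slope convergence from the right
  have hslope : ∀ t, 0 ≤ t → ∀ i,
      Tendsto (slope (fun s => x s i) t) (𝓝[>] t) (𝓝 (d t i)) := by
    intro t ht i
    have h2 := hasDerivWithinAt_iff_tendsto_slope.1 (hd t ht i)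
    refine h2.mono_left (nhdsWithin_mono _ ?_)
    intro z hz
    simp only [Set.mem_diff, Set.mem_Ici, Set.mem_singleton_iff, Set.mem_Ioi] at *
    exact ⟨le_trans ht hz.le, ne_of_gt hz⟩
  have hxcont : ∀ t, 0 ≤ t → ∀ i,
      Tendsto (fun z => x z i) (𝓝[>] t) (𝓝 (x t i)) := by
    intro t ht i
    have h2 := (hd t ht i).continuousWithinAt
    exact h2.mono_left (nhdsWithin_mono _ fun z hz => le_trans ht (le_of_lt hz))
  -- per-coordinate eventual slope bound
  have evt : ∀ t, 0 ≤ t → ∀ r : ℝ, ∀ i : Fin n,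
      (|x t i| = ‖x t‖ → (0 < x t i → d t i < r) ∧ (x t i < 0 → -d t i < r) ∧
        (x t i = 0 → |d t i| < r)) →
      ∀ᶠ z in 𝓝[>] t, (|x z i| - ‖x t‖) / (z - t) < r := by
    intro t ht r i hcond
    by_cases hm : |x t i| = ‖x t‖
    · obtain ⟨hp, hneg, hz0⟩ := hcond hm
      rcases lt_trichotomy (x t i) 0 with hlt | heq | hgt
      · have hd' : -r < d t i := by linarith [hneg hlt]
        filter_upwards [(hxcont t ht i).eventually_lt_const hlt,
          (hslope t ht i).eventually_const_lt hd', self_mem_nhdsWithin] with z h1 h2 h3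
        have hzt : t < z := h3
        have hsl : slope (fun s => x s i) t z = (x z i - x t i) / (z - t) :=
          slope_def_field _ _ _
        rw [hsl] at h2
        have : (|x z i| - ‖x t‖) / (z - t) = -((x z i - x t i) / (z - t)) := by
          rw [← hm, abs_of_neg h1, abs_of_neg hlt]
          ring
        rw [this]
        linarith
      · have h0 : ‖x t‖ = 0 := by rw [← hm, heq, abs_zero]
        have habs : Tendsto (fun z => |slope (fun s => x s i) t z|) (𝓝[>] t) (𝓝 |d t i|) :=
          (hslope t ht i).abs
        filter_upwards [habs.eventually_lt_const (hz0 heq), self_mem_nhdsWithin] with z h1 h2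
        have hzt : t < z := h2
        have : (|x z i| - ‖x t‖) / (z - t) = |slope (fun s => x s i) t z| := by
          rw [h0, slope_def_field, abs_div, abs_of_pos (by linarith : (0:ℝ) < z - t), heq,
            sub_zero, sub_zero]
        rw [this]; exact h1
      · have hd' : d t i < r := hp hgt
        filter_upwards [(hxcont t ht i).eventually_const_lt hgt,
          (hslope t ht i).eventually_lt_const hd', self_mem_nhdsWithin] with z h1 h2 h3
        have hzt : t < z := h3
        have hsl : slope (fun s => x s i) t z = (x z i - x t i) / (z - t) :=
          slope_def_field _ _ _
        rw [hsl] at h2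
        have : (|x z i| - ‖x t‖) / (z - t) = (x z i - x t i) / (z - t) := by
          rw [← hm, abs_of_pos h1, abs_of_pos hgt]
        rw [this]; exact h2
    · have hltV : |x t i| < ‖x t‖ := lt_of_le_of_ne (hVle t i) hm
      set M : ℝ := |d t i| + 1 with hM
      have habs : Tendsto (fun z => |slope (fun s => x s i) t z|) (𝓝[>] t) (𝓝 |d t i|) :=
        (hslope t ht i).abs
      have hM1 : ∀ᶠ z in 𝓝[>] t, |slope (fun s => x s i) t z| < M :=
        habs.eventually_lt_const (by rw [hM]; linarith)
      -- second term tends to -∞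
      have hinv : Tendsto (fun z => (z - t)⁻¹) (𝓝[>] t) atTop := by
        have hsub : Tendsto (fun z => z - t) (𝓝[>] t) (𝓝[>] 0) := by
          apply tendsto_nhdsWithin_of_tendsto_nhds_of_eventually_within
          · have h5 : Tendsto (fun z : ℝ => z - t) (𝓝 t) (𝓝 (t - t)) :=
              (continuous_id.sub continuous_const).tendsto t
            rw [sub_self] at h5
            exact h5.mono_left nhdsWithin_le_nhds
          · filter_upwards [self_mem_nhdsWithin] with z hz
            simpa [Set.mem_Ioi, sub_pos] using hz
        exact tendsto_inv_nhdsGT_zero.comp hsub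
      have hbot : Tendsto (fun z => (|x t i| - ‖x t‖) * (z - t)⁻¹) (𝓝[>] t) atBot :=
        (tendsto_const_mul_atBot_of_neg (by linarith)).2 hinv
      have hM2 : ∀ᶠ z in 𝓝[>] t, (|x t i| - ‖x t‖) * (z - t)⁻¹ < r - M :=
        hbot.eventually (eventually_lt_atBot (r - M))
      filter_upwards [hM1, hM2, self_mem_nhdsWithin] with z h1 h2 h3
      have hzt : t < z := h3
      have hzt' : (0:ℝ) < z - t := by linarith
      have hsplit : (|x z i| - ‖x t‖) / (z - t)
          = (|x z i| - |x t i|) / (z - t) + (|x t i| - ‖x t‖) * (z - t)⁻¹ := by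
        field_simp
        ring
      have hfirst : (|x z i| - |x t i|) / (z - t) ≤ |slope (fun s => x s i) t z| := by
        rw [slope_def_field, abs_div, abs_of_pos hzt']
        gcongr
        exact abs_sub_abs_le_abs_sub _ _
      rw [hsplit]
      linarith
  -- main slope lemma for the sup norm
  have slope_lem : ∀ t, 0 ≤ t → ∀ r : ℝ,
      (∀ i, |x t i| = ‖x t‖ → (0 < x t i → d t i < r) ∧ (x t i < 0 → -d t i < r) ∧
        (x t i = 0 → |d t i| < r)) →
      ∀ᶠ z in 𝓝[>] t, slope (fun s => ‖x s‖) t z < r := by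
    intro t ht r h
    have hall : ∀ᶠ z in 𝓝[>] t, ∀ i, (|x z i| - ‖x t‖) / (z - t) < r :=
      eventually_all.2 fun i => evt t ht r i (h i)
    filter_upwards [hall, self_mem_nhdsWithin] with z hz hz'
    obtain ⟨i, hi⟩ := hVmax z
    rw [slope_def_field]
    calc (‖x z‖ - ‖x t‖) / (z - t) = (|x z i| - ‖x t‖) / (z - t) := by rw [hi]
    _ < r := hz i
  -- decrease on the boundary region
  have hfC : ∀ s, 0 ≤ s → C ≤ ‖x s‖ → ∀ r, -η < r →
      ∀ᶠ z in 𝓝[>] s, slope (fun u => ‖x u‖) s z < r := by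
    intro s hs hCs r hr
    apply slope_lem s hs r
    intro i hi
    refine ⟨?_, ?_, ?_⟩
    · intro hpos
      have hx_eq : x s i = ‖x s‖ := by rw [← hi, abs_of_pos hpos]
      have h1 : C ≤ x s i := by rw [hx_eq]; exact hCs
      have h2 : ∀ j, |x s j| ≤ x s i := fun j => by rw [hx_eq]; exact hVle s j
      exact lt_of_le_of_lt (hdtop s hs i h1 h2) hr
    · intro hneg
      have hx_eq : -x s i = ‖x s‖ := by rw [← hi, abs_of_neg hneg]
      have h1 : x s i ≤ -C := by linarith
      have h2 : ∀ j, |x s j| ≤ -x s i := fun j => by rw [hx_eq]; exact hVle s j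
      have := hdbot s hs i h1 h2
      linarith
    · intro h0i
      exfalso
      have : ‖x s‖ = 0 := by rw [← hi, h0i, abs_zero]
      linarith
  -- invariance of the box
  have inv : ∀ t₀, 0 ≤ t₀ → ‖x t₀‖ ≤ C → ∀ t, t₀ ≤ t → ‖x t‖ ≤ C := by
    intro t₀ ht₀ h0 t htt
    have hfcont : ContinuousOn (fun s => ‖x s‖) (Set.Icc t₀ t) :=
      (hxc.mono fun z hz => le_trans ht₀ hz.1).norm
    set F' : ℝ → ℝ := fun s =>
      if h : 0 ≤ s then (if C ≤ ‖x s‖ then -η else Finset.univ.sup' hne fun i => |d s i|)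
      else 0 with hF'
    have main := image_le_of_liminf_slope_right_lt_deriv_boundary'
      (f := fun s => ‖x s‖) (f' := F') (a := t₀) (b := t)
      (B := fun _ => C) (B' := fun _ => 0) hfcont
      (by
        intro s hs r hr
        have hs0 : 0 ≤ s := le_trans ht₀ hs.1
        rw [hF'] at hr
        simp only [dif_pos hs0] at hr
        by_cases hcs : C ≤ ‖x s‖
        · rw [if_pos hcs] at hr
          exact (hfC s hs0 hcs r hr).frequently
        · rw [if_neg hcs] at hr
          refine (slope_lem s hs0 r ?_).frequently
          intro i _
          have hb : |d s i| ≤ Finset.univ.sup' hne fun j => |d s j| :=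
            Finset.le_sup' (fun j => |d s j|) (Finset.mem_univ i)
          refine ⟨fun _ => ?_, fun _ => ?_, fun _ => ?_⟩
          · exact lt_of_le_of_lt ((le_abs_self _).trans hb) hr
          · exact lt_of_le_of_lt ((neg_le_abs _).trans hb) hr
          · exact lt_of_le_of_lt hb hr)
      h0 continuousOn_const
      (fun s _ => hasDerivWithinAt_const s _ C)
      (by
        intro s hs hsc
        have hs0 : 0 ≤ s := le_trans ht₀ hs.1
        rw [hF']
        simp only [dif_pos hs0, if_pos (le_of_eq hsc.symm)]
        linarith)
    exact main ⟨htt, le_rfl⟩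
  -- eventual entry
  have entry : ∃ T, 0 ≤ T ∧ ‖x T‖ ≤ C := by
    by_cases h0 : ‖x 0‖ ≤ C
    · exact ⟨0, le_rfl, h0⟩
    push_neg at h0
    set T₀ : ℝ := 2 * ‖x 0‖ / η with hT₀
    have hx0pos : 0 < ‖x 0‖ := lt_trans hC h0
    have hT₀pos : 0 < T₀ := div_pos (by linarith) hη
    by_cases hex : ∃ s, 0 ≤ s ∧ s ≤ T₀ ∧ ‖x s‖ ≤ C
    · obtain ⟨s, h1, h2, h3⟩ := hex
      exact ⟨s, h1, h3⟩
    push_neg at hex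
    exfalso
    have hfcont : ContinuousOn (fun s => ‖x s‖) (Set.Icc 0 T₀) :=
      (hxc.mono fun z hz => hz.1).norm
    have hBcont : ContinuousOn (fun s : ℝ => ‖x 0‖ - η / 2 * s) (Set.Icc 0 T₀) :=
      (continuous_const.sub (continuous_const.mul continuous_id)).continuousOn
    have hB' : ∀ s ∈ Set.Ico (0:ℝ) T₀,
        HasDerivWithinAt (fun s : ℝ => ‖x 0‖ - η / 2 * s) (-(η / 2)) (Set.Ici s) s := by
      intro s _
      have h := ((hasDerivWithinAt_id s (Set.Ici s)).const_mul (η / 2)).const_sub (‖x 0‖)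
      simpa using h
    have main := image_le_of_liminf_slope_right_lt_deriv_boundary'
      (f := fun s => ‖x s‖) (f' := fun _ => -η) (a := 0) (b := T₀)
      (B := fun s : ℝ => ‖x 0‖ - η / 2 * s) (B' := fun _ => -(η / 2)) hfcont
      (by
        intro s hs r hr
        exact (hfC s hs.1 (hex s hs.1 hs.2.le).le r hr).frequently)
      (by simp) hBcont hB'
      (by intro s _ _; linarith)
    have hfin := main ⟨hT₀pos.le, le_rfl⟩
    have hval : η / 2 * T₀ = ‖x 0‖ := by
      rw [hT₀]
      field_simp
    have hst : C < ‖x T₀‖ := hex T₀ hT₀pos.le le_rfl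
    rw [hval] at hfin
    simp only [sub_self] at hfin
    linarith
  constructor
  · obtain ⟨T, hT0, hTC⟩ := entry
    exact ⟨T, hT0, fun t ht i => (hVle t i).trans (inv T hT0 hTC t ht)⟩
  · intro t₀ ht₀ hb t ht i
    exact (hVle t i).trans (inv t₀ ht₀ (hVle' t₀ C hC.le hb) t ht)
end

section
/- Let m be a natural number and let a₀, a₁, …, a_m be real numbers, not all zero. Then the function w : [0,1] → ℝ defined by w(x) = Σ_{k=0}^{m} a_k cos(kπx) has at most m zeros in [0,1]; that is, the cardinality of {x ∈ [0,1] : w(x) = 0} is at most m. -/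
open Polynomial Polynomial.Chebyshev Real

lemma chebT_natDegree_le : ∀ n : ℕ, (T ℝ n).natDegree ≤ n := by
  intro n
  induction n using Nat.strong_induction_on with
  | _ n ih =>
    match n with
    | 0 => simp
    | 1 => simp [Polynomial.natDegree_X_le]
    | (k+2) =>
      have h1 := ih (k+1) (by omega)
      have h0 := ih k (by omega)
      have : (T ℝ (k+2:ℕ)) = 2 * X * T ℝ (k+1:ℕ) - T ℝ (k:ℕ) := by
        push_cast
        exact T_add_two ℝ k
      rw [this]
      refine (natDegree_sub_le _ _).trans ?_
      simp only [max_le_iff]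
      constructor
      · refine (natDegree_mul_le).trans ?_
        have : (2 * X : ℝ[X]).natDegree ≤ 1 := by
          refine natDegree_mul_le.trans ?_
          simp [natDegree_X_le]
        omega
      · omega

lemma chebT_coeff_pos : ∀ n : ℕ, 0 < (T ℝ n).coeff n := by
  intro n
  induction n using Nat.strong_induction_on with
  | _ n ih =>
    match n with
    | 0 => simp
    | 1 => simp
    | (k+2) =>
      have h1 := ih (k+1) (by omega)
      have hd := chebT_natDegree_le k
      have : (T ℝ (k+2:ℕ)) = 2 * X * T ℝ (k+1:ℕ) - T ℝ (k:ℕ) := by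
        push_cast; exact T_add_two ℝ k
      rw [this]
      have h2 : (2:ℝ[X]) = C 2 := (Polynomial.C_eq_natCast 2).symm.trans (by norm_num)
      have e2 : (2 * X * T ℝ (k+1:ℕ)) = C 2 * (X * T ℝ (k+1:ℕ)) := by
        rw [← h2, mul_assoc]
      rw [coeff_sub, e2, coeff_C_mul, coeff_X_mul,
        coeff_eq_zero_of_natDegree_lt (lt_of_le_of_lt hd (by omega))]
      linarith

/-- A nonzero cosine polynomial of degree at most `m` has at most `m` zeros in `[0,1]`. -/
theorem stmt14 (m : ℕ) (a : ℕ → ℝ) (ha : ∃ k ≤ m, a k ≠ 0) :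
    Set.encard {x ∈ Set.Icc (0:ℝ) 1 |
        (∑ k ∈ Finset.range (m + 1), a k * Real.cos (k * Real.pi * x)) = 0}
      ≤ (m : ℕ∞) := by
  classical
  set P : ℝ[X] := ∑ k ∈ Finset.range (m+1), C (a k) * T ℝ k with hP
  have hdegP : P.natDegree ≤ m := by
    refine natDegree_sum_le_of_forall_le _ _ fun k hk => ?_
    refine natDegree_mul_le.trans ?_
    have := chebT_natDegree_le k
    have hk' : k ≤ m := by simpa using Nat.lt_succ_iff.mp (Finset.mem_range.mp hk)
    simp [natDegree_C]
    omega
  obtain ⟨k0, hk0m, hk0⟩ := ha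
  set Sf := (Finset.range (m+1)).filter (fun k => a k ≠ 0) with hSf
  have hne : Sf.Nonempty := ⟨k0, by
    simp only [hSf, Finset.mem_filter, Finset.mem_range]
    exact ⟨by omega, hk0⟩⟩
  set K := Sf.max' hne with hK
  have hKmem : K ∈ Sf := Sf.max'_mem hne
  have hKlt : K < m + 1 := (Finset.mem_range.mp (Finset.mem_filter.mp hKmem).1)
  have haK : a K ≠ 0 := (Finset.mem_filter.mp hKmem).2
  have hcoeff : P.coeff K = a K * (T ℝ K).coeff K := by
    rw [hP, finset_sum_coeff, Finset.sum_eq_single K]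
    · rw [coeff_C_mul]
    · intro k hk hne'
      rcases eq_or_ne (a k) 0 with h | h
      · simp [h]
      · have hk' : k ∈ Sf := Finset.mem_filter.mpr ⟨hk, h⟩
        have hkK : k < K := lt_of_le_of_ne (Sf.le_max' k hk') hne'
        rw [coeff_C_mul,
          coeff_eq_zero_of_natDegree_lt (lt_of_le_of_lt (chebT_natDegree_le k) hkK), mul_zero]
    · intro h; exact absurd (Finset.mem_range.mpr hKlt) h
  have hPne : P ≠ 0 := by
    intro h
    rw [h, coeff_zero] at hcoeff
    exact (mul_ne_zero haK (ne_of_gt (chebT_coeff_pos K))) hcoeff.symm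
  have heval : ∀ x : ℝ, P.eval (Real.cos (Real.pi * x))
      = ∑ k ∈ Finset.range (m+1), a k * Real.cos (k * Real.pi * x) := by
    intro x
    rw [hP, eval_finset_sum]
    refine Finset.sum_congr rfl fun k _ => ?_
    rw [eval_mul, eval_C, T_real_cos]
    push_cast
    ring_nf
  have hinj : Set.InjOn (fun x => Real.cos (Real.pi * x)) (Set.Icc (0:ℝ) 1) := by
    intro x hx y hy hxy
    have hx' : Real.pi * x ∈ Set.Icc 0 Real.pi :=
      ⟨mul_nonneg Real.pi_pos.le hx.1, by nlinarith [Real.pi_pos, hx.2]⟩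
    have hy' : Real.pi * y ∈ Set.Icc 0 Real.pi :=
      ⟨mul_nonneg Real.pi_pos.le hy.1, by nlinarith [Real.pi_pos, hy.2]⟩
    exact mul_left_cancel₀ Real.pi_ne_zero (Real.injOn_cos hx' hy' hxy)
  set Z := {x ∈ Set.Icc (0:ℝ) 1 |
      (∑ k ∈ Finset.range (m + 1), a k * Real.cos (k * Real.pi * x)) = 0} with hZ
  have hZsub : Z ⊆ Set.Icc (0:ℝ) 1 := fun x hx => hx.1
  have himg : (fun x => Real.cos (Real.pi * x)) '' Z ⊆ (↑P.roots.toFinset : Set ℝ) := by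
    rintro y ⟨x, hx, rfl⟩
    simp only [Finset.coe_sort_coe, Finset.mem_coe, Multiset.mem_toFinset,
      mem_roots hPne, IsRoot]
    rw [heval x]
    exact hx.2
  calc Set.encard Z = Set.encard ((fun x => Real.cos (Real.pi * x)) '' Z) :=
        ((hinj.mono hZsub).encard_image).symm
    _ ≤ Set.encard (↑P.roots.toFinset : Set ℝ) := Set.encard_le_encard himg
    _ = (P.roots.toFinset.card : ℕ∞) := Set.encard_coe_eq_coe_finsetCard _
    _ ≤ (m : ℕ∞) := by
        have := (Multiset.toFinset_card_le P.roots).trans ((P.card_roots').trans hdegP)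
        exact_mod_cast this
end

section
/- Let X be a real Banach space, Θ a compact metric space, and σ : ℝ × Θ → Θ a continuous flow (σ(0,θ) = θ and σ(s+t,θ) = σ(s, σ(t,θ))). Let 𝓗 ⊆ X be a closed subspace admitting a closed complement 𝓗' of finite dimension d (X = 𝓗' ⊕ 𝓗), and let p : X → 𝓗' be the continuous linear projection onto 𝓗' along 𝓗. Let E ⊆ X × Θ be compact and let Λ : ℝ × E → E be a continuous flow of skew-product form Λ_t(x,θ) = (φ(t,x,θ), σ(t,θ)) (Λ₀ = id, Λ_{s+t} = Λ_s ∘ Λ_t). Assume that for any two distinct points (x,θ), (y,θ) ∈ E lying over the same θ, one has φ(t,x,θ) − φ(t,y,θ) ∉ 𝓗 for every t ∈ ℝ. Then the map h : E → 𝓗' × Θ, h(x,θ) = (p(x), θ), is a homeomorphism of E onto its image Ê = h(E), and there exists a continuous flow Λ̂ : ℝ × Ê → Ê of skew-product form over σ (the Θ-component of Λ̂_t(w,θ) is σ(t,θ)) such that h(Λ_t(x,θ)) = Λ̂_t(h(x,θ)) for all t ∈ ℝ and (x,θ) ∈ E. -/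
/-- If all differences of distinct orbits over the same base point avoid the
d-codimensional subspace 𝓗, then the skew-product flow on the compact invariant
set `E` is topologically conjugate (via the projection `p` onto the
d-dimensional complement 𝓗') to a skew-product flow on a compact subset of
𝓗' × Θ. -/
theorem stmt15
    (X : Type*) [NormedAddCommGroup X] [NormedSpace ℝ X] [CompleteSpace X]
    (Θ : Type*) [MetricSpace Θ] [CompactSpace Θ]
    (σ : ℝ → Θ → Θ)
    (hσ_cont : Continuous fun q : ℝ × Θ => σ q.1 q.2)
    (hσ0 : ∀ θ, σ 0 θ = θ)
    (hσ_add : ∀ s t θ, σ (s + t) θ = σ s (σ t θ))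
    (H H' : Submodule ℝ X) (hH : IsClosed (H : Set X)) (hH' : IsClosed (H' : Set X))
    (d : ℕ) [FiniteDimensional ℝ H'] (hdim : Module.finrank ℝ H' = d)
    (hcompl : IsCompl H' H)
    (p : X →L[ℝ] X) (hp_range : ∀ x, p x ∈ H')
    (hp_H' : ∀ x ∈ H', p x = x) (hp_H : ∀ x ∈ H, p x = 0)
    (E : Set (X × Θ)) (hE : IsCompact E)
    (φ : ℝ → X → Θ → X)
    (hφ_cont : ContinuousOn (fun q : ℝ × X × Θ => φ q.1 q.2.1 q.2.2)
      {q : ℝ × X × Θ | q.2 ∈ E})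
    (hinv : ∀ t : ℝ, ∀ q ∈ E, (φ t q.1 q.2, σ t q.2) ∈ E)
    (hφ0 : ∀ q ∈ E, φ 0 q.1 q.2 = q.1)
    (hgrp : ∀ s t : ℝ, ∀ q ∈ E, φ (s + t) q.1 q.2 = φ s (φ t q.1 q.2) (σ t q.2))
    (htrans : ∀ θ : Θ, ∀ x y : X, (x, θ) ∈ E → (y, θ) ∈ E → x ≠ y →
      ∀ t : ℝ, φ t x θ - φ t y θ ∉ H) :
    (∃ e : E ≃ₜ ((fun q : X × Θ => (p q.1, q.2)) '' E),
      ∀ q : E, (e q : X × Θ) = (p (q : X × Θ).1, (q : X × Θ).2)) ∧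
    ∃ ψ : ℝ → X → Θ → X,
      ContinuousOn (fun q : ℝ × X × Θ => ψ q.1 q.2.1 q.2.2)
        {q : ℝ × X × Θ | q.2 ∈ (fun q : X × Θ => (p q.1, q.2)) '' E} ∧
      (∀ t : ℝ, ∀ w ∈ (fun q : X × Θ => (p q.1, q.2)) '' E,
        (ψ t w.1 w.2, σ t w.2) ∈ (fun q : X × Θ => (p q.1, q.2)) '' E) ∧
      (∀ w ∈ (fun q : X × Θ => (p q.1, q.2)) '' E, ψ 0 w.1 w.2 = w.1) ∧
      (∀ s t : ℝ, ∀ w ∈ (fun q : X × Θ => (p q.1, q.2)) '' E,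
        ψ (s + t) w.1 w.2 = ψ s (ψ t w.1 w.2) (σ t w.2)) ∧
      ∀ t : ℝ, ∀ q ∈ E, ψ t (p q.1) q.2 = p (φ t q.1 q.2) := by
  classical
  have hker : ∀ z : X, p z = 0 → z ∈ H := by
    intro z hz
    have hz' : z ∈ H' ⊔ H := by
      rw [hcompl.sup_eq_top]; trivial
    obtain ⟨a, ha, b, hb, rfl⟩ := Submodule.mem_sup.mp hz'
    have : p (a + b) = a := by
      rw [map_add, hp_H' a ha, hp_H b hb, add_zero]
    rw [hz] at this
    rw [← this, zero_add]
    exact hb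
  set hmap : X × Θ → X × Θ := fun q => (p q.1, q.2) with hmap_def
  set K : Set (X × Θ) := hmap '' E with hK_def
  have hinj : ∀ q ∈ E, ∀ r ∈ E, hmap q = hmap r → q = r := by
    intro q hq r hr hqr
    have h2' := congrArg Prod.snd hqr
    have h1' := congrArg Prod.fst hqr
    have h2 : q.2 = r.2 := h2'
    have h1 : p q.1 = p r.1 := h1'
    by_cases hne : q.1 = r.1
    · exact Prod.ext hne h2
    · exfalso
      have hrE : (r.1, q.2) ∈ E := by rw [h2, Prod.mk.eta]; exact hr
      have := htrans q.2 q.1 r.1 hq hrE hne 0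
      apply this
      rw [hφ0 q hq, hφ0 (r.1, q.2) hrE]
      exact hker _ (by rw [map_sub, h1, sub_self])
  haveI : CompactSpace E := isCompact_iff_compactSpace.mp hE
  have hf_mem : ∀ q : E, hmap (q : X × Θ) ∈ K := fun q => ⟨(q : X × Θ), q.2, rfl⟩
  let f : E → K := fun q => ⟨hmap (q : X × Θ), hf_mem q⟩
  have hf_bij : Function.Bijective f := by
    constructor
    · intro q r hqr
      exact Subtype.ext (hinj q q.2 r r.2 (congrArg Subtype.val hqr))
    · rintro ⟨w, q, hq, rfl⟩
      exact ⟨⟨q, hq⟩, rfl⟩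
  have hf_cont : Continuous f := by
    apply Continuous.subtype_mk
    exact ((p.continuous.comp continuous_fst).prodMk continuous_snd).comp
      continuous_subtype_val
  let e : E ≃ₜ K := Continuous.homeoOfEquivCompactToT2
    (f := Equiv.ofBijective f hf_bij) hf_cont
  have he_coe : ∀ q : E, (e q : X × Θ) = hmap (q : X × Θ) := fun q => rfl
  set g : X × Θ → X × Θ := fun w => if hw : w ∈ K then (e.symm ⟨w, hw⟩ : X × Θ) else w
    with hg_def
  have hg_mem : ∀ w ∈ K, g w ∈ E := by
    intro w hw
    simp only [hg_def, dif_pos hw]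
    exact (e.symm ⟨w, hw⟩).2
  have hg_spec : ∀ w ∈ K, hmap (g w) = w := by
    intro w hw
    simp only [hg_def, dif_pos hw]
    have h := congrArg Subtype.val (e.apply_symm_apply ⟨w, hw⟩)
    rw [he_coe] at h
    exact h
  have hg_of_E : ∀ q ∈ E, g (hmap q) = q := by
    intro q hq
    have hw : hmap q ∈ K := ⟨q, hq, rfl⟩
    simp only [hg_def, dif_pos hw]
    have : (⟨hmap q, hw⟩ : K) = e ⟨q, hq⟩ := Subtype.ext (he_coe ⟨q, hq⟩).symm
    rw [this, e.symm_apply_apply]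
  have hg_snd : ∀ w ∈ K, (g w).2 = w.2 := by
    intro w hw
    have h := congrArg Prod.snd (hg_spec w hw)
    exact h
  have hg_fst : ∀ w ∈ K, p (g w).1 = w.1 := by
    intro w hw
    have h := congrArg Prod.fst (hg_spec w hw)
    exact h
  set ψ : ℝ → X → Θ → X := fun t w θ => p (φ t (g (w, θ)).1 θ) with hψ_def
  constructor
  · exact ⟨e, he_coe⟩
  refine ⟨ψ, ?_, ?_, ?_, ?_, ?_⟩
  · -- continuity
    have hgK : ContinuousOn g K := by
      rw [continuousOn_iff_continuous_restrict]
      have : K.domRestrict g = fun k : K => (e.symm k : X × Θ) := by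
        funext k
        simp only [Set.domRestrict_apply, hg_def, dif_pos k.2]
      rw [this]
      exact continuous_subtype_val.comp e.symm.continuous
    have hm : ContinuousOn (fun q : ℝ × X × Θ => (q.1, g q.2)) {q : ℝ × X × Θ | q.2 ∈ K} :=
      continuousOn_fst.prodMk (hgK.comp continuousOn_snd (fun q hq => hq))
    have hmaps : Set.MapsTo (fun q : ℝ × X × Θ => (q.1, g q.2))
        {q : ℝ × X × Θ | q.2 ∈ K} {q : ℝ × X × Θ | q.2 ∈ E} := by
      intro q hq
      exact hg_mem q.2 hq
    have hc : ContinuousOn (fun q : ℝ × X × Θ => p (φ q.1 (g q.2).1 (g q.2).2))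
        {q : ℝ × X × Θ | q.2 ∈ K} :=
      p.continuous.comp_continuousOn (hφ_cont.comp hm hmaps)
    apply hc.congr
    intro q hq
    simp only [hψ_def, Prod.mk.eta]
    rw [hg_snd q.2 hq]
  · -- invariance
    intro t w hw
    have hE' := hinv t (g w) (hg_mem w hw)
    refine ⟨(φ t (g w).1 (g w).2, σ t (g w).2), hE', ?_⟩
    simp only [hψ_def, hmap_def, Prod.mk.eta]
    rw [hg_snd w hw]
  · -- ψ 0
    intro w hw
    simp only [hψ_def, Prod.mk.eta]
    have h2 := hg_snd w hw
    have h0 : φ 0 (g w).1 w.2 = (g w).1 := by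
      rw [← h2]; exact hφ0 (g w) (hg_mem w hw)
    rw [h0, hg_fst w hw]
  · -- group law
    intro s t w hw
    have hgE := hg_mem w hw
    have h2 := hg_snd w hw
    have hEt : (φ t (g w).1 w.2, σ t w.2) ∈ E := by
      rw [← h2]; exact hinv t (g w) hgE
    simp only [hψ_def, Prod.mk.eta]
    have hg2 : g (p (φ t (g w).1 w.2), σ t w.2) = (φ t (g w).1 w.2, σ t w.2) :=
      hg_of_E _ hEt
    rw [hg2]
    have hthis := hgrp s t (g w) hgE
    rw [h2] at hthis
    rw [hthis]
  · -- conjugacy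
    intro t q hq
    simp only [hψ_def]
    have : ((p q.1, q.2) : X × Θ) = hmap q := rfl
    rw [this, hg_of_E q hq]
end
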